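/- arXiv:1009.3461 — 7 statements merged into one kernel-verified Lean document; each statement's English description precedes it below -/
import Mathlib

section
/- Let X be a complex Banach space with the property that every bounded linear operator on X has the form w·I + S for some w ∈ ℂ with S strictly singular, and let Y = X ⊕ X. Then for every bounded linear operator T on Y there exist a continuous linear automorphism J of Y, scalars λ₁, λ₂ ∈ ℂ, and strictly singular operators S₁, S₂, S₃, S₄ on X such that either J⁻¹TJ(x,y) = (λ₁x + y + S₁x + S₂y, λ₂y + S₃x + S₄y) for all (x,y) ∈ Y, or J⁻¹TJ(x,y) = (λ₁x + S₁x + S₂y, λ₂y + S₃x + S₄y) for all (x,y) ∈ Y. -/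
open Filter Topology

/-- The J-set of `x` under the operator `T`. -/
def JSet {𝕜 X : Type*} [NontriviallyNormedField 𝕜] [NormedAddCommGroup X] [NormedSpace 𝕜 X]
    (T : X →L[𝕜] X) (x : X) : Set X :=
  {y | ∃ k : ℕ → ℕ, StrictMono k ∧ ∃ u : ℕ → X,
    Tendsto u atTop (𝓝 x) ∧ Tendsto (fun n => (T ^ k n) (u n)) atTop (𝓝 y)}

/-- A bounded operator is strictly singular if it is bounded below by no positive constant
on any infinite-dimensional subspace. -/
def StrictlySingular {𝕜 X : Type*} [NontriviallyNormedField 𝕜] [NormedAddCommGroup X]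
    [NormedSpace 𝕜 X] (S : X →L[𝕜] X) : Prop :=
  ∀ M : Submodule 𝕜 X, ¬ FiniteDimensional 𝕜 M →
    ¬ ∃ c : ℝ, 0 < c ∧ ∀ x ∈ M, c * ‖x‖ ≤ ‖S x‖

section Aux

variable {X : Type*} [NormedAddCommGroup X] [NormedSpace ℂ X]

lemma exists_ne_zero_of_infdim (M : Submodule ℂ X) (hM : ¬ FiniteDimensional ℂ M) :
    ∃ x ∈ M, x ≠ 0 := by
  by_contra h
  push_neg at h
  have : M = ⊥ := (Submodule.eq_bot_iff M).mpr h
  exact hM (this ▸ inferInstance)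

lemma ss_smul (c : ℂ) {S : X →L[ℂ] X} (hS : StrictlySingular S) :
    StrictlySingular (c • S) := by
  intro M hM ⟨c', hc', hb⟩
  by_cases hc : c = 0
  · obtain ⟨x, hxM, hx0⟩ := exists_ne_zero_of_infdim M hM
    have := hb x hxM
    simp [hc] at this
    have h1 : 0 < c' * ‖x‖ := mul_pos hc' (norm_pos_iff.mpr hx0)
    linarith
  · refine hS M hM ⟨c' / ‖c‖, div_pos hc' (norm_pos_iff.mpr hc), fun x hx => ?_⟩
    have := hb x hx
    rw [ContinuousLinearMap.smul_apply, norm_smul] at this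
    rw [div_mul_eq_mul_div, div_le_iff₀ (norm_pos_iff.mpr hc)]
    linarith [this]

lemma infdim_inf_ker (M : Submodule ℂ X) (hM : ¬FiniteDimensional ℂ M) (g : X →L[ℂ] ℂ) :
    ¬ FiniteDimensional ℂ ↥(M ⊓ LinearMap.ker (g : X →ₗ[ℂ] ℂ)) := by
  intro h
  apply hM
  by_cases hg : ∃ x₀ ∈ M, g x₀ ≠ 0
  · obtain ⟨x₀, hx₀M, hx₀⟩ := hg
    have hle : M ≤ (M ⊓ LinearMap.ker (g : X →ₗ[ℂ] ℂ)) ⊔ (Submodule.span ℂ {x₀}) := by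
      intro x hx
      have h1 : x - (g x / g x₀) • x₀ ∈ M ⊓ LinearMap.ker (g : X →ₗ[ℂ] ℂ) := by
        rw [Submodule.mem_inf]
        refine ⟨sub_mem hx (Submodule.smul_mem _ _ hx₀M), ?_⟩
        rw [LinearMap.mem_ker]
        simp only [ContinuousLinearMap.coe_coe, map_sub, map_smul, smul_eq_mul]
        field_simp
        ring
      have h2 : x = (x - (g x / g x₀) • x₀) + (g x / g x₀) • x₀ := by abel
      rw [h2]
      exact Submodule.add_mem _ (Submodule.mem_sup_left h1)
        (Submodule.mem_sup_right (Submodule.smul_mem _ _ (Submodule.mem_span_singleton_self x₀)))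
    exact Submodule.finiteDimensional_of_le hle
  · push_neg at hg
    have heq : M ⊓ LinearMap.ker (g : X →ₗ[ℂ] ℂ) = M := inf_eq_left.mpr (fun x hx => hg x hx)
    rw [← heq]
    exact h

lemma infdim_inf_finset_ker {α : Type*} (M : Submodule ℂ X) (hM : ¬FiniteDimensional ℂ M)
    (s : Finset α) (φ : α → (X →L[ℂ] ℂ)) :
    ¬ FiniteDimensional ℂ ↥(M ⊓ s.inf (fun t => LinearMap.ker (φ t : X →ₗ[ℂ] ℂ))) := by
  classical
  induction s using Finset.induction_on generalizing M with
  | empty => exact fun h => hM (by rwa [Finset.inf_empty, inf_top_eq] at h)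
  | insert t s hnew ih =>
    have h1 := infdim_inf_ker _ (ih M hM) (φ t)
    rwa [show (M ⊓ s.inf fun t => LinearMap.ker (φ t : X →ₗ[ℂ] ℂ)) ⊓ LinearMap.ker (φ t : X →ₗ[ℂ] ℂ)
        = M ⊓ (insert t s).inf (fun t => LinearMap.ker (φ t : X →ₗ[ℂ] ℂ)) by
      rw [Finset.inf_insert, inf_comm (LinearMap.ker (φ t : X →ₗ[ℂ] ℂ)), ← inf_assoc]] at h1

lemma exists_unit_small {S : X →L[ℂ] X} (hS : StrictlySingular S) (M : Submodule ℂ X)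
    (hM : ¬ FiniteDimensional ℂ M) {c : ℝ} (hc : 0 < c) :
    ∃ x ∈ M, ‖x‖ = 1 ∧ ‖S x‖ < c := by
  have h := hS M hM
  push_neg at h
  obtain ⟨x, hxM, hx⟩ := h c hc
  have hx0 : x ≠ 0 := by
    rintro rfl
    simp at hx
  have hnx : (0:ℝ) < ‖x‖ := norm_pos_iff.mpr hx0
  refine ⟨(‖x‖ : ℂ)⁻¹ • x, Submodule.smul_mem _ _ hxM, ?_, ?_⟩
  · rw [norm_smul]
    simp [norm_inv, hnx.ne']
  · rw [map_smul, norm_smul]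
    simp only [norm_inv, Complex.norm_real, Real.norm_eq_abs, abs_of_pos hnx]
    rw [inv_mul_lt_iff₀ hnx]
    linarith [hx]

lemma coeff_bound (x : ℕ → X) (g : ℕ → X →L[ℂ] ℂ) (hnorm : ∀ n, ‖x n‖ = 1)
    (hg1 : ∀ n, ‖g n‖ = 1) (hgx : ∀ n, g n (x n) = 1)
    (hker : ∀ m n, m < n → g m (x n) = 0)
    (m : ℕ) (c : ℕ → ℂ) :
    ∀ n < m, ‖c n‖ ≤ 2^n * ‖∑ k ∈ Finset.range m, c k • x k‖ := by
  set y := ∑ k ∈ Finset.range m, c k • x k with hy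
  intro n
  induction n using Nat.strong_induction_on with
  | _ n IH =>
    intro hnm
    have hgny : (g n) y = ∑ k ∈ Finset.range m, c k * g n (x k) := by
      rw [hy, map_sum]
      simp [smul_eq_mul]
    have hsub : Finset.range (n+1) ⊆ Finset.range m := Finset.range_subset_range.mpr hnm
    have hvanish : ∀ k ∈ Finset.range m, k ∉ Finset.range (n+1) → c k * g n (x k) = 0 := by
      intro k _ hk
      have hnk : n < k := by simpa [Nat.lt_succ_iff, not_le] using Finset.mem_range.not.mp hk
      rw [hker n k hnk, mul_zero]
    have h2 : (g n) y = (∑ k ∈ Finset.range n, c k * g n (x k)) + c n := by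
      rw [hgny, ← Finset.sum_subset hsub hvanish, Finset.sum_range_succ, hgx n, mul_one]
    have hcn : c n = (g n) y - ∑ k ∈ Finset.range n, c k * g n (x k) := by
      rw [h2]; ring
    have hb1 : ‖(g n) y‖ ≤ ‖y‖ := by
      calc ‖(g n) y‖ ≤ ‖g n‖ * ‖y‖ := (g n).le_opNorm y
      _ = ‖y‖ := by rw [hg1 n, one_mul]
    have hb2 : ‖∑ k ∈ Finset.range n, c k * g n (x k)‖ ≤ ∑ k ∈ Finset.range n, 2^k * ‖y‖ := by
      refine (norm_sum_le _ _).trans (Finset.sum_le_sum fun k hk => ?_)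
      have h3 : ‖g n (x k)‖ ≤ 1 := by
        calc ‖g n (x k)‖ ≤ ‖g n‖ * ‖x k‖ := (g n).le_opNorm _
        _ = 1 := by rw [hg1 n, hnorm k, one_mul]
      calc ‖c k * g n (x k)‖ = ‖c k‖ * ‖g n (x k)‖ := norm_mul _ _
      _ ≤ ‖c k‖ * 1 := by gcongr
      _ = ‖c k‖ := mul_one _
      _ ≤ 2^k * ‖y‖ := IH k (Finset.mem_range.mp hk) ((Finset.mem_range.mp hk).trans hnm)
    have hgeom : ∑ k ∈ Finset.range n, (2:ℝ)^k * ‖y‖ = (2^n - 1) * ‖y‖ := by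
      rw [← Finset.sum_mul]
      congr 1
      have := geom_sum_eq (by norm_num : (2:ℝ) ≠ 1) n
      rw [this]; ring
    calc ‖c n‖ ≤ ‖(g n) y‖ + ‖∑ k ∈ Finset.range n, c k * g n (x k)‖ := by
          rw [hcn]; exact norm_sub_le _ _
    _ ≤ ‖y‖ + (2^n - 1) * ‖y‖ := by rw [← hgeom]; exact add_le_add hb1 hb2
    _ = 2^n * ‖y‖ := by ring

lemma hereditary {S : X →L[ℂ] X} (hS : StrictlySingular S) (M : Submodule ℂ X)
    (hM : ¬ FiniteDimensional ℂ M) {ε : ℝ} (hε : 0 < ε) :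
    ∃ N : Submodule ℂ X, N ≤ M ∧ ¬ FiniteDimensional ℂ N ∧ ∀ y ∈ N, ‖S y‖ ≤ ε * ‖y‖ := by
  classical
  set P : ℕ × X × (X →L[ℂ] ℂ) → Prop := fun t =>
    t.2.1 ∈ M ∧ ‖t.2.1‖ = 1 ∧ ‖S t.2.1‖ ≤ ε/2 * (1/4)^t.1 ∧ ‖t.2.2‖ = 1 ∧ t.2.2 t.2.1 = 1
    with hP
  set r : ℕ × X × (X →L[ℂ] ℂ) → ℕ × X × (X →L[ℂ] ℂ) → Prop := fun t t' =>
    t.1 < t'.1 ∧ t.2.2 t'.2.1 = 0 with hr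
  obtain ⟨f, hPf, hrf⟩ : ∃ f : ℕ → ℕ × X × (X →L[ℂ] ℂ), (∀ n, P (f n)) ∧
      ∀ m n, m < n → r (f m) (f n) := by
    apply exists_seq_of_forall_finset_exists P r
    intro s hs
    set n := (s.sup fun t => t.1) + 1 with hn
    have hMs := infdim_inf_finset_ker M hM s (fun t => t.2.2)
    have hpos : (0:ℝ) < ε/2 * (1/4)^n := by positivity
    obtain ⟨x, hxM, hx1, hxS⟩ := exists_unit_small hS _ hMs hpos
    have hx0 : x ≠ 0 := by intro h; rw [h] at hx1; simp at hx1
    obtain ⟨g, hg1, hgx⟩ := exists_dual_vector ℂ x (norm_ne_zero_iff.mpr hx0)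
    refine ⟨(n, x, g), ⟨?_, hx1, hxS.le, hg1, by rw [hgx, hx1]; norm_num⟩, ?_⟩
    · exact (Submodule.mem_inf.mp hxM).1
    · intro t hts
      constructor
      · exact Nat.lt_succ_of_le (Finset.le_sup (f := fun t => t.1) hts)
      · have h2 := (Submodule.mem_inf.mp hxM).2
        have h3 : s.inf (fun t => LinearMap.ker (t.2.2 : X →ₗ[ℂ] ℂ)) ≤ LinearMap.ker (t.2.2 : X →ₗ[ℂ] ℂ) :=
          Finset.inf_le hts
        exact LinearMap.mem_ker.mp (h3 h2)
  set x : ℕ → X := fun n => (f n).2.1 with hx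
  set g : ℕ → X →L[ℂ] ℂ := fun n => (f n).2.2 with hg
  set tag : ℕ → ℕ := fun n => (f n).1 with htag
  have htagmono : StrictMono tag := fun m n h => (hrf m n h).1
  have hxM : ∀ n, x n ∈ M := fun n => (hPf n).1
  have hnorm : ∀ n, ‖x n‖ = 1 := fun n => (hPf n).2.1
  have hg1 : ∀ n, ‖g n‖ = 1 := fun n => (hPf n).2.2.2.1
  have hgx : ∀ n, g n (x n) = 1 := fun n => (hPf n).2.2.2.2
  have hker : ∀ m n, m < n → g m (x n) = 0 := fun m n h => (hrf m n h).2
  have hSx : ∀ n, ‖S (x n)‖ ≤ ε/2 * (1/4)^n := by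
    intro n
    refine ((hPf n).2.2.1).trans ?_
    have h1 : (1/4:ℝ)^(tag n) ≤ (1/4)^n :=
      pow_le_pow_of_le_one (by norm_num) (by norm_num) (htagmono.le_apply)
    have : 0 < ε/2 := by linarith
    nlinarith [h1]
  refine ⟨Submodule.span ℂ (Set.range x), ?_, ?_, ?_⟩
  · rw [Submodule.span_le]
    rintro - ⟨n, rfl⟩
    exact hxM n
  · intro hfin
    have hind : LinearIndependent ℂ x := by
      rw [linearIndependent_iff']
      intro s c hsum i his
      set m := (s.sup id) + 1 with hm
      have hsub : s ⊆ Finset.range m :=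
        fun k hk => Finset.mem_range.mpr (Nat.lt_succ_of_le (Finset.le_sup (f := id) hk))
      set c' : ℕ → ℂ := fun k => if k ∈ s then c k else 0 with hc'
      have hsum' : ∑ k ∈ Finset.range m, c' k • x k = 0 := by
        rw [← Finset.sum_subset hsub (fun k _ hk => by simp [hc', hk])]
        rw [← hsum]
        exact Finset.sum_congr rfl fun k hk => by simp [hc', hk]
      have := coeff_bound x g hnorm hg1 hgx hker m c' i
        (Finset.mem_range.mp (hsub his))
      rw [hsum'] at this
      simp only [norm_zero, mul_zero] at this
      have : c' i = 0 := norm_le_zero_iff.mp this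
      simpa [hc', his] using this
    have := (linearIndependent_span hind).finite
    exact not_finite ℕ
  · intro y hy
    obtain ⟨c, hc⟩ := Finsupp.mem_span_range_iff_exists_finsupp.mp hy
    set m := (c.support.sup id) + 1 with hm
    have hsub : c.support ⊆ Finset.range m :=
      fun k hk => Finset.mem_range.mpr (Nat.lt_succ_of_le (Finset.le_sup (f := id) hk))
    have hyeq : y = ∑ k ∈ Finset.range m, c k • x k := by
      rw [← hc, Finsupp.sum]
      exact Finset.sum_subset hsub (fun k _ hk => by
        rw [Finsupp.notMem_support_iff.mp hk, zero_smul])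
    have hbound := coeff_bound x g hnorm hg1 hgx hker m (fun k => c k)
    calc ‖S y‖ = ‖∑ k ∈ Finset.range m, c k • S (x k)‖ := by
          rw [hyeq, map_sum]; simp only [map_smul]
    _ ≤ ∑ k ∈ Finset.range m, ‖c k • S (x k)‖ := norm_sum_le _ _
    _ ≤ ∑ k ∈ Finset.range m, (ε/2) * (1/2)^k * ‖y‖ := by
        refine Finset.sum_le_sum fun k hk => ?_
        rw [norm_smul]
        have h1 := hbound k (Finset.mem_range.mp hk)
        rw [← hyeq] at h1
        have h2 := hSx k
        have h3 : ‖c k‖ * ‖S (x k)‖ ≤ (2^k * ‖y‖) * (ε/2 * (1/4)^k) := by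
          apply mul_le_mul h1 h2 (norm_nonneg _)
          positivity
        refine h3.trans (le_of_eq ?_)
        have h4 : (2:ℝ)^k * (1/4)^k = (1/2)^k := by
          rw [← mul_pow]; norm_num
        calc (2^k * ‖y‖) * (ε/2 * (1/4)^k) = (ε/2) * (2^k * (1/4)^k) * ‖y‖ := by ring
        _ = (ε/2) * (1/2)^k * ‖y‖ := by rw [h4]
    _ = (ε/2) * (∑ k ∈ Finset.range m, (1/2:ℝ)^k) * ‖y‖ := by
        rw [Finset.mul_sum, Finset.sum_mul]
    _ ≤ (ε/2) * 2 * ‖y‖ := by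
        have := sum_geometric_two_le m
        have h5 : (0:ℝ) ≤ ε/2 := by linarith
        have h6 : (0:ℝ) ≤ ‖y‖ := norm_nonneg _
        gcongr
    _ = ε * ‖y‖ := by ring

lemma ss_add {S T : X →L[ℂ] X} (hS : StrictlySingular S) (hT : StrictlySingular T) :
    StrictlySingular (S + T) := by
  intro M hM ⟨c, hc, hb⟩
  obtain ⟨N₁, hN₁M, hN₁, h1⟩ := hereditary hS M hM (show (0:ℝ) < c/3 by linarith)
  obtain ⟨N₂, hN₂N₁, hN₂, h2⟩ := hereditary hT N₁ hN₁ (show (0:ℝ) < c/3 by linarith)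
  obtain ⟨x, hxN₂, hx0⟩ := exists_ne_zero_of_infdim N₂ hN₂
  have hxM : x ∈ M := hN₁M (hN₂N₁ hxN₂)
  have hbx := hb x hxM
  have hS' := h1 x (hN₂N₁ hxN₂)
  have hT' := h2 x hxN₂
  have hsum : ‖(S + T) x‖ ≤ ‖S x‖ + ‖T x‖ := by
    rw [ContinuousLinearMap.add_apply]
    exact norm_add_le _ _
  have hnx : 0 < ‖x‖ := norm_pos_iff.mpr hx0
  nlinarith

lemma jordan2 (a b c d : ℂ) :
    ∃ p q r s l₁ l₂ δ : ℂ, (δ = 0 ∨ δ = 1) ∧ p*s - q*r ≠ 0 ∧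
      a*p + b*r = l₁*p ∧ c*p + d*r = l₁*r ∧
      a*q + b*s = δ*p + l₂*q ∧ c*q + d*s = δ*r + l₂*s := by
  obtain ⟨w, hw⟩ : ∃ w : ℂ, w^2 = (a-d)^2 + 4*(b*c) :=
    IsAlgClosed.exists_pow_nat_eq _ two_pos
  set l₁ : ℂ := (a+d+w)/2 with hl₁
  set l₂ : ℂ := (a+d-w)/2 with hl₂
  have htr : l₁ + l₂ = a + d := by rw [hl₁, hl₂]; ring
  have hroot : l₁^2 - (a+d)*l₁ + (a*d - b*c) = 0 := by
    rw [hl₁]; linear_combination hw/4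
  by_cases hb : b ≠ 0
  · refine ⟨b, 0, l₁ - a, 1, l₁, l₂, 1, Or.inr rfl, by simpa using hb,
      by ring, by linear_combination -hroot, by ring, by linear_combination htr⟩
  · by_cases hc : c ≠ 0
    · refine ⟨l₁ - d, 1, c, 0, l₁, l₂, 1, Or.inr rfl, by simpa using hc,
        by linear_combination -hroot, by ring, by linear_combination htr, by ring⟩
    · push_neg at hb hc
      exact ⟨1, 0, 0, 1, a, d, 0, Or.inl rfl, by norm_num,
        by ring, by linear_combination hc, by linear_combination hb, by ring⟩

end Aux

theorem stmt_5 {X : Type*} [NormedAddCommGroup X] [NormedSpace ℂ X] [CompleteSpace X]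
    (hform : ∀ A : X →L[ℂ] X, ∃ (w : ℂ) (S : X →L[ℂ] X),
      StrictlySingular S ∧ A = w • ContinuousLinearMap.id ℂ X + S)
    (T : (X × X) →L[ℂ] (X × X)) :
    ∃ (J : (X × X) ≃L[ℂ] (X × X)) (lam₁ lam₂ : ℂ) (S₁ S₂ S₃ S₄ : X →L[ℂ] X),
      StrictlySingular S₁ ∧ StrictlySingular S₂ ∧ StrictlySingular S₃ ∧ StrictlySingular S₄ ∧
      ((∀ p : X × X, J.symm (T (J p)) =
          (lam₁ • p.1 + p.2 + S₁ p.1 + S₂ p.2, lam₂ • p.2 + S₃ p.1 + S₄ p.2)) ∨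
       (∀ p : X × X, J.symm (T (J p)) =
          (lam₁ • p.1 + S₁ p.1 + S₂ p.2, lam₂ • p.2 + S₃ p.1 + S₄ p.2))) := by
  classical
  obtain ⟨a, SA, hSA, hAeq⟩ := hform
    ((ContinuousLinearMap.fst ℂ X X).comp (T.comp (ContinuousLinearMap.inl ℂ X X)))
  obtain ⟨b, SB, hSB, hBeq⟩ := hform
    ((ContinuousLinearMap.fst ℂ X X).comp (T.comp (ContinuousLinearMap.inr ℂ X X)))
  obtain ⟨cc, SC, hSC, hCeq⟩ := hform
    ((ContinuousLinearMap.snd ℂ X X).comp (T.comp (ContinuousLinearMap.inl ℂ X X)))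
  obtain ⟨dd, SD, hSD, hDeq⟩ := hform
    ((ContinuousLinearMap.snd ℂ X X).comp (T.comp (ContinuousLinearMap.inr ℂ X X)))
  have hA1 : ∀ u : X, (T (u, 0)).1 = a • u + SA u := by
    intro u
    have := ContinuousLinearMap.ext_iff.mp hAeq u
    simpa using this
  have hC1 : ∀ u : X, (T (u, 0)).2 = cc • u + SC u := by
    intro u
    have := ContinuousLinearMap.ext_iff.mp hCeq u
    simpa using this
  have hB1 : ∀ v : X, (T (0, v)).1 = b • v + SB v := by
    intro v
    have := ContinuousLinearMap.ext_iff.mp hBeq v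
    simpa using this
  have hD1 : ∀ v : X, (T (0, v)).2 = dd • v + SD v := by
    intro v
    have := ContinuousLinearMap.ext_iff.mp hDeq v
    simpa using this
  have hT : ∀ u v : X, T (u, v) =
      (a • u + SA u + (b • v + SB v), cc • u + SC u + (dd • v + SD v)) := by
    intro u v
    have h0 : ((u, v) : X × X) = (u, 0) + (0, v) := by simp
    rw [h0, map_add]
    rw [Prod.ext_iff]
    constructor
    · show (T (u,0)).1 + (T (0,v)).1 = _
      rw [hA1 u, hB1 v]
    · show (T (u,0)).2 + (T (0,v)).2 = _
      rw [hC1 u, hD1 v]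
  obtain ⟨p, q, r, s, l₁, l₂, δ, hδ, hdet, e1, e2, e3, e4⟩ := jordan2 a b cc dd
  obtain ⟨e, he⟩ : ∃ e : ℂ, e * (p*s - q*r) = 1 := ⟨(p*s - q*r)⁻¹, inv_mul_cancel₀ hdet⟩
  set F : (X × X) →L[ℂ] (X × X) :=
    ((p • ContinuousLinearMap.fst ℂ X X) + (q • ContinuousLinearMap.snd ℂ X X)).prod
      ((r • ContinuousLinearMap.fst ℂ X X) + (s • ContinuousLinearMap.snd ℂ X X)) with hFdef
  set G : (X × X) →L[ℂ] (X × X) :=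
    (((e*s) • ContinuousLinearMap.fst ℂ X X) + ((-(e*q)) • ContinuousLinearMap.snd ℂ X X)).prod
      (((-(e*r)) • ContinuousLinearMap.fst ℂ X X) + ((e*p) • ContinuousLinearMap.snd ℂ X X))
      with hGdef
  have hFapp : ∀ z : X × X, F z = (p • z.1 + q • z.2, r • z.1 + s • z.2) := fun z => rfl
  have hGapp : ∀ z : X × X,
      G z = ((e*s) • z.1 + (-(e*q)) • z.2, (-(e*r)) • z.1 + (e*p) • z.2) := fun z => rfl
  have hGF : Function.LeftInverse G F := by
    intro z
    rw [hFapp, hGapp]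
    rw [Prod.ext_iff]
    constructor
    · show (e*s) • (p • z.1 + q • z.2) + (-(e*q)) • (r • z.1 + s • z.2) = z.1
      match_scalars <;> first | ring1 | linear_combination he
    · show (-(e*r)) • (p • z.1 + q • z.2) + (e*p) • (r • z.1 + s • z.2) = z.2
      match_scalars <;> first | ring1 | linear_combination he
  have hFG : Function.RightInverse G F := by
    intro z
    rw [hGapp, hFapp]
    rw [Prod.ext_iff]
    constructor
    · show p • ((e*s) • z.1 + (-(e*q)) • z.2) + q • ((-(e*r)) • z.1 + (e*p) • z.2) = z.1
      match_scalars <;> first | ring1 | linear_combination he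
    · show r • ((e*s) • z.1 + (-(e*q)) • z.2) + s • ((-(e*r)) • z.1 + (e*p) • z.2) = z.2
      match_scalars <;> first | ring1 | linear_combination he
  set J : (X × X) ≃L[ℂ] (X × X) := ContinuousLinearEquiv.equivOfInverse F G hGF hFG with hJdef
  set S₁ : X →L[ℂ] X :=
    (e*s*p) • SA + (e*s*r) • SB + (-(e*q*p)) • SC + (-(e*q*r)) • SD with hS₁def
  set S₂ : X →L[ℂ] X :=
    (e*s*q) • SA + (e*s*s) • SB + (-(e*q*q)) • SC + (-(e*q*s)) • SD with hS₂def
  set S₃ : X →L[ℂ] X :=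
    (-(e*r*p)) • SA + (-(e*r*r)) • SB + (e*p*p) • SC + (e*p*r) • SD with hS₃def
  set S₄ : X →L[ℂ] X :=
    (-(e*r*q)) • SA + (-(e*r*s)) • SB + (e*p*q) • SC + (e*p*s) • SD with hS₄def
  have k1 : e*s*(a*p + b*r) + -(e*q)*(cc*p + dd*r) = l₁ := by
    linear_combination (e*s)*e1 - (e*q)*e2 + l₁*he
  have k2 : e*s*(a*q + b*s) + -(e*q)*(cc*q + dd*s) = δ := by
    linear_combination (e*s)*e3 - (e*q)*e4 + δ*he
  have k3 : -(e*r)*(a*p + b*r) + e*p*(cc*p + dd*r) = 0 := by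
    linear_combination -(e*r)*e1 + (e*p)*e2
  have k4 : -(e*r)*(a*q + b*s) + e*p*(cc*q + dd*s) = l₂ := by
    linear_combination -(e*r)*e3 + (e*p)*e4 + l₂*he
  have key : ∀ z : X × X, J.symm (T (J z)) =
      (l₁ • z.1 + δ • z.2 + S₁ z.1 + S₂ z.2, l₂ • z.2 + S₃ z.1 + S₄ z.2) := by
    rintro ⟨x, y⟩
    show G (T (F (x, y))) = _
    rw [hFapp]
    simp only []
    rw [hT (p • x + q • y) (r • x + s • y), hGapp]
    rw [Prod.ext_iff]
    simp only [hS₁def, hS₂def, hS₃def, hS₄def, ContinuousLinearMap.add_apply,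
      ContinuousLinearMap.coe_smul', Pi.smul_apply, map_add, map_smul]
    constructor
    · match_scalars <;> first | ring1 | linear_combination k1 | linear_combination k2
    · match_scalars <;> first | ring1 | linear_combination k3 | linear_combination k4
  refine ⟨J, l₁, l₂, S₁, S₂, S₃, S₄,
    ss_add (ss_add (ss_add (ss_smul _ hSA) (ss_smul _ hSB)) (ss_smul _ hSC)) (ss_smul _ hSD),
    ss_add (ss_add (ss_add (ss_smul _ hSA) (ss_smul _ hSB)) (ss_smul _ hSC)) (ss_smul _ hSD),
    ss_add (ss_add (ss_add (ss_smul _ hSA) (ss_smul _ hSB)) (ss_smul _ hSC)) (ss_smul _ hSD),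
    ss_add (ss_add (ss_add (ss_smul _ hSA) (ss_smul _ hSB)) (ss_smul _ hSC)) (ss_smul _ hSD),
    ?_⟩
  rcases hδ with rfl | rfl
  · right
    intro z
    rw [key z]
    simp
  · left
    intro z
    rw [key z]
    simp
end

section
/- Let X be a Banach space and T a bounded linear operator on X over ℂ. If the J-set J_T(x) has nonempty interior for some x ∈ X with x ≠ 0, then the spectrum of T intersects the unit circle, i.e. σ(T) ∩ {μ ∈ ℂ : |μ| = 1} ≠ ∅. -/
open Filter Topology

namespace Stmt7Aux

open Complex Metric Set

set_option linter.unusedSectionVars false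

variable {X : Type*} [NormedAddCommGroup X] [NormedSpace ℂ X] [CompleteSpace X]

/-- The circle integral `(2πi)⁻¹ ∮_{|z|=s} z^m (z - T)⁻¹ dz`. -/
noncomputable def F (T : X →L[ℂ] X) (m : ℤ) (s : ℝ) : X →L[ℂ] X :=
  (2 * Real.pi * I : ℂ)⁻¹ • ∮ z in C(0, s), z ^ m • resolvent T z

lemma continuousOn_aux (T : X →L[ℂ] X) (m : ℤ) {U : Set ℂ}
    (h0 : (0:ℂ) ∉ U) (hU : ∀ z ∈ U, z ∈ resolventSet ℂ T) :
    ContinuousOn (fun z : ℂ => z ^ m • resolvent T z) U := by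
  intro z hz
  have hz0 : z ≠ 0 := fun h => h0 (h ▸ hz)
  exact ((continuousAt_zpow₀ z m (Or.inl hz0)).smul
    ((spectrum.hasDerivAt_resolvent (hU z hz)).differentiableAt.continuousAt)).continuousWithinAt

lemma integrable_aux (T : X →L[ℂ] X) (m : ℤ) {s : ℝ} (hs0 : 0 < s)
    (hs : ∀ z ∈ sphere (0:ℂ) s, z ∈ resolventSet ℂ T) :
    CircleIntegrable (fun z : ℂ => z ^ m • resolvent T z) 0 s := by
  refine (continuousOn_aux T m ?_ hs).circleIntegrable hs0.le
  simpa using hs0.ne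

lemma map_circleIntegral {E Fs : Type*} [NormedAddCommGroup E] [NormedSpace ℂ E] [CompleteSpace E]
    [NormedAddCommGroup Fs] [NormedSpace ℂ Fs] [CompleteSpace Fs]
    (L : E →L[ℂ] Fs) {f : ℂ → E} {c : ℂ} {R : ℝ} (hf : CircleIntegrable f c R) :
    (∮ z in C(c, R), L (f z)) = L (∮ z in C(c, R), f z) := by
  rw [circleIntegral, circleIntegral, ← L.intervalIntegral_comp_comm hf.out]
  simp [L.map_smul]

lemma resolvent_comm (T : X →L[ℂ] X) {z : ℂ} (hz : z ∈ resolventSet ℂ T) :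
    T * resolvent T z = resolvent T z * T := by
  set a := algebraMap ℂ (X →L[ℂ] X) z - T with ha
  have hu : IsUnit a := spectrum.mem_resolventSet_iff.mp hz
  have h1 : a * resolvent T z = 1 := Ring.mul_inverse_cancel a hu
  have h2 : resolvent T z * a = 1 := Ring.inverse_mul_cancel a hu
  have hcomm : T * a = a * T := by
    rw [ha, mul_sub, sub_mul, Algebra.commutes]
  calc T * resolvent T z = (resolvent T z * a) * (T * resolvent T z) := by rw [h2, one_mul]
    _ = resolvent T z * (a * T) * resolvent T z := by simp only [mul_assoc]
    _ = resolvent T z * (T * a) * resolvent T z := by rw [hcomm]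
    _ = (resolvent T z * T) * (a * resolvent T z) := by simp only [mul_assoc]
    _ = resolvent T z * T := by rw [h1, mul_one]

lemma T_mul_resolvent (T : X →L[ℂ] X) {z : ℂ} (hz : z ∈ resolventSet ℂ T) :
    T * resolvent T z = z • resolvent T z - 1 := by
  have hu : IsUnit (algebraMap ℂ (X →L[ℂ] X) z - T) := spectrum.mem_resolventSet_iff.mp hz
  have h1 : (algebraMap ℂ (X →L[ℂ] X) z - T) * resolvent T z = 1 :=
    Ring.mul_inverse_cancel _ hu
  rw [sub_mul, Algebra.smul_def] at *
  linear_combination (norm := module) -h1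

lemma T_mul_F (T : X →L[ℂ] X) (m : ℤ) {s : ℝ} (hs0 : 0 < s)
    (hs : ∀ z ∈ sphere (0:ℂ) s, z ∈ resolventSet ℂ T) :
    T * F T m s = F T (m + 1) s - (if m = -1 then 1 else 0) := by
  have hint : CircleIntegrable (fun z : ℂ => z ^ m • resolvent T z) 0 s :=
    integrable_aux T m hs0 hs
  have hint1 : CircleIntegrable (fun z : ℂ => z ^ (m + 1) • resolvent T z) 0 s :=
    integrable_aux T (m + 1) hs0 hs
  have hintc : CircleIntegrable (fun z : ℂ => z ^ m • (1 : X →L[ℂ] X)) 0 s := by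
    refine ContinuousOn.circleIntegrable hs0.le ?_
    refine fun z hz => ((continuousAt_zpow₀ z m (Or.inl ?_)).smul
      continuousAt_const).continuousWithinAt
    intro h; rw [mem_sphere_iff_norm, h] at hz; simp at hz; exact hs0.ne' hz.symm
  have key : EqOn (fun z : ℂ => T * (z ^ m • resolvent T z))
      (fun z : ℂ => z ^ (m + 1) • resolvent T z - z ^ m • (1 : X →L[ℂ] X)) (sphere (0:ℂ) s) := by
    intro z hz
    have hz0 : z ≠ 0 := by
      intro h; rw [mem_sphere_iff_norm, h] at hz; simp at hz; exact hs0.ne' hz.symm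
    simp only
    rw [mul_smul_comm, T_mul_resolvent T (hs z hz), smul_sub, smul_smul,
      ← zpow_add_one₀ hz0]
  have hL : T * (∮ z in C(0, s), z ^ m • resolvent T z)
      = ∮ z in C(0, s), T * (z ^ m • resolvent T z) :=
    (map_circleIntegral (ContinuousLinearMap.mul ℂ (X →L[ℂ] X) T) hint).symm
  have hzpow : (∮ z in C(0, s), z ^ m • (1 : X →L[ℂ] X))
      = (if m = -1 then (2 * Real.pi * I : ℂ) else 0) • (1 : X →L[ℂ] X) := by
    rw [circleIntegral.integral_smul_const]
    congr 1
    by_cases hm : m = -1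
    · subst hm
      have : (∮ z in C(0, s), z ^ (-1 : ℤ)) = ∮ z in C(0, s), (z - 0)⁻¹ := by
        apply circleIntegral.integral_congr hs0.le
        intro z hz; simp [zpow_neg_one]
      rw [this, circleIntegral.integral_sub_inv_of_mem_ball (by simpa using hs0)]
      simp
    · have : (∮ z in C(0, s), z ^ m) = ∮ z in C(0, s), (z - 0) ^ m := by
        apply circleIntegral.integral_congr hs0.le
        intro z hz; simp
      rw [this, circleIntegral.integral_sub_zpow_of_ne hm]
      simp [hm]
  have hsplit : (∮ z in C(0, s), T * (z ^ m • resolvent T z))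
      = (∮ z in C(0, s), z ^ (m+1) • resolvent T z) - ∮ z in C(0, s), z ^ m • (1 : X →L[ℂ] X) := by
    rw [circleIntegral.integral_congr hs0.le key]
    exact circleIntegral.integral_sub hint1 hintc
  rw [F, mul_smul_comm, hL, hsplit, hzpow, F, smul_sub, smul_smul]
  congr 1
  by_cases hm : m = -1
  · rw [if_pos hm, if_pos hm, inv_mul_cancel₀ two_pi_I_ne_zero, one_smul]
  · rw [if_neg hm, if_neg hm, mul_zero, zero_smul]

lemma F_comm (T : X →L[ℂ] X) (m : ℤ) {s : ℝ} (hs0 : 0 < s)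
    (hs : ∀ z ∈ sphere (0:ℂ) s, z ∈ resolventSet ℂ T) :
    T * F T m s = F T m s * T := by
  have hint : CircleIntegrable (fun z : ℂ => z ^ m • resolvent T z) 0 s :=
    integrable_aux T m hs0 hs
  have h1 : T * (∮ z in C(0, s), z ^ m • resolvent T z)
      = ∮ z in C(0, s), T * (z ^ m • resolvent T z) :=
    (map_circleIntegral (ContinuousLinearMap.mul ℂ (X →L[ℂ] X) T) hint).symm
  have h2 : (∮ z in C(0, s), z ^ m • resolvent T z) * T
      = ∮ z in C(0, s), (z ^ m • resolvent T z) * T :=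
    (map_circleIntegral ((ContinuousLinearMap.mul ℂ (X →L[ℂ] X)).flip T) hint).symm
  have key : EqOn (fun z : ℂ => T * (z ^ m • resolvent T z))
      (fun z : ℂ => (z ^ m • resolvent T z) * T) (sphere (0:ℂ) s) := fun z hz => by
    simp only
    rw [mul_smul_comm, resolvent_comm T (hs z hz), smul_mul_assoc]
  rw [F, mul_smul_comm, smul_mul_assoc, h1, h2, circleIntegral.integral_congr hs0.le key]

lemma F_deform (T : X →L[ℂ] X) (m : ℤ) {s₁ s₂ : ℝ} (h0 : 0 < s₁) (h12 : s₁ ≤ s₂)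
    (hann : ∀ z : ℂ, s₁ ≤ ‖z‖ → ‖z‖ ≤ s₂ → z ∈ resolventSet ℂ T) :
    F T m s₂ = F T m s₁ := by
  unfold F
  congr 1
  refine circleIntegral_eq_of_differentiable_on_annulus_off_countable h0 h12 countable_empty ?_ ?_
  · refine continuousOn_aux T m ?_ ?_
    · rintro ⟨h1, h2⟩
      rw [mem_ball, dist_self] at h2
      exact absurd h0 (by simpa using h2)
    · rintro z ⟨h1, h2⟩
      rw [mem_closedBall_zero_iff] at h1
      rw [mem_ball, dist_zero_right] at h2
      exact hann z (le_of_not_gt h2) h1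
  · rintro z ⟨⟨h1, h2⟩, -⟩
    rw [mem_ball_zero_iff] at h1
    rw [mem_closedBall_zero_iff] at h2
    have hz : z ∈ resolventSet ℂ T := hann z (le_of_not_ge h2) h1.le
    have hz0 : z ≠ 0 := by
      intro h; apply h2; rw [h]; simpa using h0.le
    exact (differentiableAt_zpow.mpr (Or.inl hz0)).smul
      (spectrum.hasDerivAt_resolvent hz).differentiableAt

lemma norm_two_pi_I_inv : ‖(2 * Real.pi * I : ℂ)⁻¹‖ = (2 * Real.pi)⁻¹ := by
  rw [norm_inv]
  simp [abs_of_pos Real.pi_pos]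

lemma F_norm_le (T : X →L[ℂ] X) (m : ℤ) {s : ℝ} (hs0 : 0 < s) {C : ℝ}
    (hC : ∀ z ∈ sphere (0:ℂ) s, ‖resolvent T z‖ ≤ C) :
    ‖F T m s‖ ≤ s ^ (m + 1) * C := by
  have hC0 : 0 ≤ C := le_trans (norm_nonneg _) (hC s (by simp [Real.norm_of_nonneg hs0.le, hs0.le]))
  have hb : ∀ z ∈ sphere (0:ℂ) s, ‖z ^ m • resolvent T z‖ ≤ s ^ m * C := by
    intro z hz
    rw [mem_sphere_iff_norm, sub_zero] at hz
    rw [norm_smul (z ^ m) (resolvent T z), norm_zpow, hz]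
    exact mul_le_mul_of_nonneg_left (hC z (by simp [mem_sphere_iff_norm, hz])) (zpow_nonneg hs0.le m)
  have h1 : ‖∮ z in C(0, s), z ^ m • resolvent T z‖ ≤ 2 * Real.pi * s * (s ^ m * C) :=
    circleIntegral.norm_integral_le_of_norm_le_const (c := (0:ℂ)) hs0.le hb
  rw [F, norm_smul ((2 * Real.pi * I : ℂ)⁻¹) (∮ z in C(0, s), z ^ m • resolvent T z)]
  rw [norm_two_pi_I_inv]
  calc (2 * Real.pi)⁻¹ * ‖∮ z in C(0, s), z ^ m • resolvent T z‖
      ≤ (2 * Real.pi)⁻¹ * (2 * Real.pi * s * (s ^ m * C)) :=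
        mul_le_mul_of_nonneg_left h1 (by positivity)
    _ = s ^ (m + 1) * C := by
        rw [zpow_add_one₀ hs0.ne']
        field_simp

lemma F_zero_eq_one (T : X →L[ℂ] X) {s : ℝ} (hs : ‖T‖ * ‖(1 : X →L[ℂ] X)‖ < s) :
    F T 0 s = 1 := by
  have hres_out : ∀ z : ℂ, ‖T‖ * ‖(1 : X →L[ℂ] X)‖ < ‖z‖ → z ∈ resolventSet ℂ T :=
    fun z h => spectrum.mem_resolventSet_of_norm_lt_mul h
  have hs0 : 0 < s := lt_of_le_of_lt (by positivity) hs
  obtain ⟨C, hC⟩ := (spectrum.resolvent_isBigO_inv (𝕜 := ℂ) T).isBigOWith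
  have hC' := hC.bound
  rw [Filter.atTop_basis_Ioi.cobounded_of_norm.eventually_iff] at hC'
  obtain ⟨r₀, -, hr₀⟩ := hC'
  have key : ∀ R : ℝ, s ≤ R → r₀ < R →
      ‖F T 0 s - 1‖ ≤ ‖T‖ * C / R := by
    intro R hsR hrR
    have hR0 : 0 < R := lt_of_lt_of_le hs0 hsR
    have hRres : ∀ z ∈ sphere (0:ℂ) R, z ∈ resolventSet ℂ T := by
      intro z hz
      rw [mem_sphere_iff_norm, sub_zero] at hz
      exact hres_out z (by rw [hz]; exact lt_of_lt_of_le hs hsR)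
    have hdef : F T 0 s = F T 0 R :=
      (F_deform T 0 hs0 hsR fun z h1 h2 => hres_out z (lt_of_lt_of_le hs h1)).symm
    have hint : CircleIntegrable (fun z : ℂ => z ^ (0:ℤ) • resolvent T z) 0 R :=
      integrable_aux T 0 hR0 hRres
    have hintc : CircleIntegrable (fun z : ℂ => z⁻¹ • (1 : X →L[ℂ] X)) 0 R := by
      refine ContinuousOn.circleIntegrable hR0.le fun z hz => ?_
      have hz0 : z ≠ 0 := by
        rw [mem_sphere_iff_norm, sub_zero] at hz
        intro h; rw [h] at hz; simp at hz; exact hR0.ne' hz.symm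
      exact ((continuousAt_inv₀ hz0).smul continuousAt_const).continuousWithinAt
    have hone : (2 * Real.pi * I : ℂ)⁻¹ • (∮ z in C(0,R), z⁻¹ • (1 : X →L[ℂ] X)) = 1 := by
      rw [circleIntegral.integral_smul_const]
      have : (∮ z in C(0,R), z⁻¹) = (2 * Real.pi * I : ℂ) := by
        have := circleIntegral.integral_sub_inv_of_mem_ball
          (c := (0:ℂ)) (w := (0:ℂ)) (R := R) (by simpa using hR0)
        rw [← this]
        exact circleIntegral.integral_congr hR0.le fun z hz => by simp
      rw [this, smul_smul, inv_mul_cancel₀ two_pi_I_ne_zero, one_smul]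
    have split : F T 0 s - 1
        = (2 * Real.pi * I : ℂ)⁻¹ • ∮ z in C(0,R),
            (z ^ (0:ℤ) • resolvent T z - z⁻¹ • (1 : X →L[ℂ] X)) := by
      rw [hdef, F]
      conv_lhs => rw [← hone]
      rw [← smul_sub, circleIntegral.integral_sub hint hintc]
    have hbound : ∀ z ∈ sphere (0:ℂ) R,
        ‖z ^ (0:ℤ) • resolvent T z - z⁻¹ • (1 : X →L[ℂ] X)‖ ≤ R⁻¹ * (‖T‖ * (C * R⁻¹)) := by
      intro z hz
      rw [mem_sphere_iff_norm, sub_zero] at hz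
      have hz0 : z ≠ 0 := by intro h; rw [h] at hz; simp at hz; exact hR0.ne' hz.symm
      have hres : z ∈ resolventSet ℂ T := hRres z (by simp [mem_sphere_iff_norm, hz])
      have hid : z ^ (0:ℤ) • resolvent T z - z⁻¹ • (1 : X →L[ℂ] X)
          = z⁻¹ • (T * resolvent T z) := by
        rw [T_mul_resolvent T hres, smul_sub, smul_smul, inv_mul_cancel₀ hz0, one_smul,
          zpow_zero, one_smul]
      rw [hid, norm_smul (z⁻¹) (T * resolvent T z), norm_inv, hz]
      refine mul_le_mul_of_nonneg_left ?_ (by positivity)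
      calc ‖T * resolvent T z‖ ≤ ‖T‖ * ‖resolvent T z‖ := norm_mul_le _ _
        _ ≤ ‖T‖ * (C * R⁻¹) := by
            refine mul_le_mul_of_nonneg_left ?_ (norm_nonneg _)
            have := hr₀ (Set.mem_setOf.mpr (by rw [hz]; exact hrR : ‖z‖ ∈ Set.Ioi r₀))
            simpa [norm_inv, hz] using this
    calc ‖F T 0 s - 1‖
        = ‖(2 * Real.pi * I : ℂ)⁻¹‖ * ‖∮ z in C(0,R),
            (z ^ (0:ℤ) • resolvent T z - z⁻¹ • (1 : X →L[ℂ] X))‖ := by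
          rw [split, norm_smul ((2 * Real.pi * I : ℂ)⁻¹)
            (∮ z in C(0,R), (z ^ (0:ℤ) • resolvent T z - z⁻¹ • (1 : X →L[ℂ] X)))]
      _ ≤ (2 * Real.pi)⁻¹ * (2 * Real.pi * R * (R⁻¹ * (‖T‖ * (C * R⁻¹)))) := by
          rw [norm_two_pi_I_inv]
          exact mul_le_mul_of_nonneg_left
            (circleIntegral.norm_integral_le_of_norm_le_const hR0.le hbound) (by positivity)
      _ = ‖T‖ * C / R := by field_simp
  have hzero : ‖F T 0 s - 1‖ ≤ 0 := by
    refine le_of_forall_pos_le_add fun ε hε => ?_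
    set D := |‖T‖ * C| with hD
    have hD0 : 0 ≤ D := abs_nonneg _
    set R := max (max s (r₀ + 1)) (D / ε + 1) with hR
    have h1 : s ≤ R := le_trans (le_max_left _ _) (le_max_left _ _)
    have h2 : r₀ < R :=
      lt_of_lt_of_le (lt_add_one r₀) (le_trans (le_max_right s _) (le_max_left _ _))
    have h3 : D / ε < R := lt_of_lt_of_le (lt_add_one _) (le_max_right _ _)
    have hR0 : 0 < R := lt_of_lt_of_le hs0 h1
    have hkey := key R h1 h2
    have hstep : ‖T‖ * C / R ≤ ε := by
      rw [div_le_iff₀ hR0]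
      calc ‖T‖ * C ≤ D := le_abs_self _
        _ = (D / ε) * ε := by field_simp
        _ ≤ R * ε := mul_le_mul_of_nonneg_right h3.le hε.le
        _ = ε * R := mul_comm _ _
    linarith
  have : F T 0 s - 1 = 0 := by rwa [← norm_le_zero_iff]
  linear_combination (norm := abel) this

end Stmt7Aux

set_option maxHeartbeats 1000000 in
theorem stmt_7 {X : Type*} [NormedAddCommGroup X] [NormedSpace ℂ X] [CompleteSpace X]
    (T : X →L[ℂ] X) (x : X) (hx : x ≠ 0) (h : (interior (JSet T x)).Nonempty) :
    spectrum ℂ T ∩ {μ : ℂ | ‖μ‖ = 1} ≠ ∅ := by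
  classical
  by_contra h'
  -- separation of the spectrum from the unit circle
  have hK : IsCompact (spectrum ℂ T) := spectrum.isCompact T
  have hSclosed : IsClosed (norm '' spectrum ℂ T) := (hK.image continuous_norm).isClosed
  have h1S : (1:ℝ) ∉ norm '' spectrum ℂ T := by
    rintro ⟨z, hzK, hz1⟩
    exact Set.eq_empty_iff_forall_notMem.mp h' z ⟨hzK, hz1⟩
  obtain ⟨ε, hε0, hball⟩ := Metric.isOpen_iff.mp hSclosed.isOpen_compl 1 h1S
  set δ : ℝ := min ε 1 with hδdef
  have hδ0 : 0 < δ := lt_min hε0 one_pos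
  have hδ1 : δ ≤ 1 := min_le_right _ _
  have hδε : δ ≤ ε := min_le_left _ _
  set r : ℝ := 1 - δ/2 with hrdef
  set ρ : ℝ := 1 + δ/2 with hρdef
  have hr0 : 0 < r := by rw [hrdef]; linarith
  have hr1 : r < 1 := by rw [hrdef]; linarith
  have hρ0 : 0 < ρ := by rw [hρdef]; linarith
  have hρ1 : 1 < ρ := by rw [hρdef]; linarith
  have hρ2 : ρ ≤ 2 := by rw [hρdef]; linarith
  have hres : ∀ z : ℂ, r ≤ ‖z‖ → ‖z‖ ≤ ρ → z ∈ resolventSet ℂ T := by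
    intro z h1 h2
    by_contra hzres
    have hzspec : z ∈ spectrum ℂ T := hzres
    refine hball ?_ ⟨z, hzspec, rfl⟩
    rw [Metric.mem_ball, Real.dist_eq]
    rw [hrdef] at h1; rw [hρdef] at h2
    have : |‖z‖ - 1| ≤ δ/2 := abs_le.mpr ⟨by linarith, by linarith⟩
    linarith
  -- sphere hypotheses
  have hsph : ∀ (s : ℝ) (z : ℂ), z ∈ Metric.sphere (0:ℂ) s → ‖z‖ = s := by
    intro s z hz; rwa [mem_sphere_iff_norm, sub_zero] at hz
  have hres_r : ∀ z ∈ Metric.sphere (0:ℂ) r, z ∈ resolventSet ℂ T := fun z hz =>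
    hres z (le_of_eq (hsph r z hz).symm) (by rw [hsph r z hz]; linarith)
  have hres_1 : ∀ z ∈ Metric.sphere (0:ℂ) 1, z ∈ resolventSet ℂ T := fun z hz =>
    hres z (by rw [hsph 1 z hz]; linarith) (by rw [hsph 1 z hz]; linarith)
  have hres_ρ : ∀ z ∈ Metric.sphere (0:ℂ) ρ, z ∈ resolventSet ℂ T := fun z hz =>
    hres z (by rw [hsph ρ z hz]; linarith) (le_of_eq (hsph ρ z hz))
  set R₀ : ℝ := ‖T‖ * ‖(1 : X →L[ℂ] X)‖ + 2 with hR₀def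
  have hR₀ : ‖T‖ * ‖(1 : X →L[ℂ] X)‖ < R₀ := by rw [hR₀def]; linarith
  have hR₀0 : 0 < R₀ := by
    have : (0:ℝ) ≤ ‖T‖ * ‖(1 : X →L[ℂ] X)‖ := by positivity
    rw [hR₀def]; linarith
  have hρR₀ : ρ ≤ R₀ := by
    have : (0:ℝ) ≤ ‖T‖ * ‖(1 : X →L[ℂ] X)‖ := by positivity
    rw [hR₀def]; linarith
  have hres_R₀ : ∀ z ∈ Metric.sphere (0:ℂ) R₀, z ∈ resolventSet ℂ T := fun z hz =>
    spectrum.mem_resolventSet_of_norm_lt_mul (by rw [hsph R₀ z hz]; exact hR₀)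
  -- resolvent norm bounds on spheres
  have bound : ∀ s : ℝ, 0 < s → (∀ z ∈ Metric.sphere (0:ℂ) s, z ∈ resolventSet ℂ T) →
      ∃ C : ℝ, 0 ≤ C ∧ ∀ z ∈ Metric.sphere (0:ℂ) s, ‖resolvent T z‖ ≤ C := by
    intro s hs0 hs
    obtain ⟨C, hC⟩ := (isCompact_sphere (0:ℂ) s).exists_bound_of_continuousOn
      (fun z hz =>
        ((spectrum.hasDerivAt_resolvent (hs z hz)).differentiableAt.continuousAt).continuousWithinAt)
    exact ⟨max C 0, le_max_right _ _, fun z hz => le_trans (hC z hz) (le_max_left _ _)⟩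
  obtain ⟨Cr, hCr0, hCr⟩ := bound r hr0 hres_r
  obtain ⟨Cρ, hCρ0, hCρ⟩ := bound ρ hρ0 hres_ρ
  obtain ⟨CR, hCR0, hCR⟩ := bound R₀ hR₀0 hres_R₀
  -- the spectral projection candidate
  set P : X →L[ℂ] X := Stmt7Aux.F T 0 1 with hPdef
  have hTPcomm : Commute T P := Stmt7Aux.F_comm T 0 one_pos hres_1
  have hTP : ∀ n : ℕ, T ^ n * P = Stmt7Aux.F T (n:ℤ) 1 := by
    intro n
    induction n with
    | zero => rw [pow_zero, one_mul, hPdef]; norm_num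
    | succ n ih =>
      have hcast : ((n:ℤ)) + 1 = (((n+1:ℕ)):ℤ) := by push_cast; ring
      have hne : ((n:ℤ)) ≠ -1 := by omega
      rw [pow_succ', mul_assoc, ih, Stmt7Aux.T_mul_F T (n:ℤ) one_pos hres_1, if_neg hne,
        sub_zero, hcast]
  have hPbound : ∀ n : ℕ, ‖T ^ n * P‖ ≤ (r * Cr) * r ^ n := by
    intro n
    have hdef : Stmt7Aux.F T (n:ℤ) 1 = Stmt7Aux.F T (n:ℤ) r :=
      Stmt7Aux.F_deform T (n:ℤ) hr0 hr1.le (fun z h1 h2 => hres z h1 (by linarith))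
    rw [hTP n, hdef]
    calc ‖Stmt7Aux.F T (n:ℤ) r‖ ≤ r ^ ((n:ℤ) + 1) * Cr := Stmt7Aux.F_norm_le T (n:ℤ) hr0 hCr
      _ = (r * Cr) * r ^ n := by
          rw [show ((n:ℤ)+1) = (((n+1:ℕ)):ℤ) by push_cast; ring, zpow_natCast, pow_succ']
          ring
  -- the outer operators
  set Q : ℕ → (X →L[ℂ] X) :=
    fun n => Stmt7Aux.F T (-(n:ℤ)) R₀ - Stmt7Aux.F T (-(n:ℤ)) ρ with hQdef
  have hQ0 : Q 0 = 1 - P := by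
    have hbig : Stmt7Aux.F T 0 R₀ = 1 := Stmt7Aux.F_zero_eq_one T hR₀
    have hmid : Stmt7Aux.F T 0 ρ = Stmt7Aux.F T 0 1 :=
      Stmt7Aux.F_deform T 0 one_pos hρ1.le (fun z h1 h2 => hres z (by linarith) h2)
    simp only [hQdef, Nat.cast_zero, neg_zero]
    rw [hbig, hmid, hPdef]
  have hTQ : ∀ n : ℕ, T * Q (n+1) = Q n := by
    intro n
    have hcast : (-(((n+1:ℕ)):ℤ)) + 1 = -((n:ℕ):ℤ) := by push_cast; ring
    simp only [hQdef]
    rw [mul_sub, Stmt7Aux.T_mul_F T _ hR₀0 hres_R₀, Stmt7Aux.T_mul_F T _ hρ0 hres_ρ, hcast]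
    abel
  have hQcomm : ∀ n : ℕ, T * Q n = Q n * T := by
    intro n
    simp only [hQdef]
    rw [mul_sub, sub_mul, Stmt7Aux.F_comm T _ hR₀0 hres_R₀, Stmt7Aux.F_comm T _ hρ0 hres_ρ]
  have hQT : ∀ n : ℕ, Q n * T ^ n = Q 0 := by
    intro n
    induction n with
    | zero => rw [pow_zero, mul_one]
    | succ n ih =>
      rw [pow_succ', ← mul_assoc, ← hQcomm (n+1), hTQ n]
      exact ih
  set CQ : ℝ := R₀ * CR + ρ * Cρ with hCQdef
  have hCQ0 : 0 ≤ CQ := by positivity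
  have hQbound : ∀ n : ℕ, ‖Q n‖ ≤ CQ * (ρ⁻¹) ^ n := by
    intro n
    have hzps : ∀ s : ℝ, 0 < s → s ^ (-(n:ℤ) + 1) = s * (s⁻¹) ^ n := by
      intro s hs
      rw [zpow_add_one₀ hs.ne', zpow_neg, zpow_natCast, ← inv_pow, mul_comm]
    have hinvle : (R₀⁻¹) ^ n ≤ (ρ⁻¹) ^ n :=
      pow_le_pow_left₀ (inv_nonneg.mpr hR₀0.le) (inv_anti₀ hρ0 hρR₀) n
    have hinv0 : (0:ℝ) ≤ (ρ⁻¹) ^ n := by positivity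
    simp only [hQdef]
    calc ‖Stmt7Aux.F T (-(n:ℤ)) R₀ - Stmt7Aux.F T (-(n:ℤ)) ρ‖
        ≤ ‖Stmt7Aux.F T (-(n:ℤ)) R₀‖ + ‖Stmt7Aux.F T (-(n:ℤ)) ρ‖ := norm_sub_le _ _
      _ ≤ R₀ ^ (-(n:ℤ) + 1) * CR + ρ ^ (-(n:ℤ) + 1) * Cρ :=
          add_le_add (Stmt7Aux.F_norm_le T _ hR₀0 hCR) (Stmt7Aux.F_norm_le T _ hρ0 hCρ)
      _ = (R₀ * (R₀⁻¹) ^ n) * CR + (ρ * (ρ⁻¹) ^ n) * Cρ := by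
          rw [hzps R₀ hR₀0, hzps ρ hρ0]
      _ ≤ (R₀ * (ρ⁻¹) ^ n) * CR + (ρ * (ρ⁻¹) ^ n) * Cρ := by
          have := mul_le_mul_of_nonneg_left hinvle hR₀0.le
          nlinarith
      _ = CQ * (ρ⁻¹) ^ n := by rw [hCQdef]; ring
  -- the interior point
  obtain ⟨y₀, hy₀⟩ := h
  rw [mem_interior_iff_mem_nhds, Metric.mem_nhds_iff] at hy₀
  obtain ⟨ε₁, hε₁0, hball₁⟩ := hy₀
  -- P vanishes on the J-set
  have hJP : ∀ y ∈ JSet T x, P y = 0 := by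
    rintro y ⟨k, hk, u, hu, hTu⟩
    have h1 : Tendsto (fun n => P ((T ^ k n) (u n))) atTop (𝓝 (P y)) :=
      (P.continuous.tendsto y).comp hTu
    have h2 : Tendsto (fun n => P ((T ^ k n) (u n))) atTop (𝓝 0) := by
      apply squeeze_zero_norm (a := fun n => ((r * Cr) * r ^ n) * ‖u n‖)
      · intro n
        have hPap : P ((T ^ k n) (u n)) = (T ^ k n * P) (u n) := by
          rw [(hTPcomm.pow_left (k n)).eq, ContinuousLinearMap.mul_apply]
        rw [hPap]
        calc ‖(T ^ k n * P) (u n)‖ ≤ ‖T ^ k n * P‖ * ‖u n‖ :=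
              ContinuousLinearMap.le_opNorm _ _
          _ ≤ ((r * Cr) * r ^ (k n)) * ‖u n‖ :=
              mul_le_mul_of_nonneg_right (hPbound (k n)) (norm_nonneg _)
          _ ≤ ((r * Cr) * r ^ n) * ‖u n‖ := by
              have hpow : r ^ (k n) ≤ r ^ n :=
                pow_le_pow_of_le_one hr0.le hr1.le hk.le_apply
              have h0 : (0:ℝ) ≤ r * Cr := by positivity
              exact mul_le_mul_of_nonneg_right
                (mul_le_mul_of_nonneg_left hpow h0) (norm_nonneg (u n))
      · have hr' : Tendsto (fun n : ℕ => (r * Cr) * r ^ n) atTop (𝓝 0) := by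
          simpa using (tendsto_pow_atTop_nhds_zero_of_lt_one hr0.le hr1).const_mul (r * Cr)
        simpa using hr'.mul hu.norm
    exact tendsto_nhds_unique h1 h2
  -- hence P = 0
  have hP0 : ∀ v : X, P v = 0 := by
    intro v
    rcases eq_or_ne v 0 with rfl | hv
    · simp
    have hv0 : (0:ℝ) < ‖v‖ := norm_pos_iff.mpr hv
    have hy₀J : P y₀ = 0 := hJP y₀ (hball₁ (Metric.mem_ball_self hε₁0))
    set c : ℂ := ((ε₁ / (2 * ‖v‖) : ℝ) : ℂ) with hcdef
    have hc0 : c ≠ 0 := by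
      rw [hcdef, ne_eq, Complex.ofReal_eq_zero]
      positivity
    have hw : y₀ + c • v ∈ Metric.ball y₀ ε₁ := by
      rw [Metric.mem_ball, dist_eq_norm, add_sub_cancel_left, norm_smul c v, hcdef,
        Complex.norm_real, Real.norm_eq_abs, abs_of_pos (by positivity)]
      have hcv : ε₁ / (2 * ‖v‖) * ‖v‖ = ε₁ / 2 := by field_simp
      rw [hcv]
      linarith
    have hPw := hJP _ (hball₁ hw)
    rw [map_add, map_smul, hy₀J, zero_add] at hPw
    exact (smul_eq_zero.mp hPw).resolve_left hc0
  -- Q 0 kills x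
  obtain ⟨k, hk, u, hu, hTu⟩ := hball₁ (Metric.mem_ball_self hε₁0)
  have hB : ∀ᶠ n in atTop, ‖(T ^ k n) (u n)‖ ≤ ‖y₀‖ + 1 :=
    (hTu.norm.eventually_lt_const (lt_add_one ‖y₀‖)).mono fun n hn => hn.le
  have hQ0x : (Q 0) x = 0 := by
    have h1 : Tendsto (fun n => (Q 0) (u n)) atTop (𝓝 ((Q 0) x)) :=
      ((Q 0).continuous.tendsto x).comp hu
    have h2 : Tendsto (fun n => (Q 0) (u n)) atTop (𝓝 0) := by
      apply squeeze_zero_norm' (a := fun n => (CQ * (ρ⁻¹) ^ n) * (‖y₀‖ + 1))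
      · refine hB.mono fun n hn => ?_
        have hQap : (Q 0) (u n) = (Q (k n)) ((T ^ k n) (u n)) := by
          rw [← hQT (k n), ContinuousLinearMap.mul_apply]
        rw [hQap]
        have hρinv0 : (0:ℝ) ≤ ρ⁻¹ := by positivity
        have hρinv1 : ρ⁻¹ ≤ 1 := by
          rw [inv_le_one_iff₀]; right; linarith
        calc ‖(Q (k n)) ((T ^ k n) (u n))‖ ≤ ‖Q (k n)‖ * ‖(T ^ k n) (u n)‖ :=
              ContinuousLinearMap.le_opNorm _ _
          _ ≤ (CQ * (ρ⁻¹) ^ (k n)) * (‖y₀‖ + 1) := by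
              have hy0 : (0:ℝ) ≤ ‖y₀‖ + 1 := by positivity
              have := hQbound (k n)
              nlinarith [norm_nonneg ((T ^ k n) (u n)), norm_nonneg (Q (k n)),
                pow_nonneg hρinv0 (k n)]
          _ ≤ (CQ * (ρ⁻¹) ^ n) * (‖y₀‖ + 1) := by
              have hpow : (ρ⁻¹) ^ (k n) ≤ (ρ⁻¹) ^ n :=
                pow_le_pow_of_le_one hρinv0 hρinv1 hk.le_apply
              exact mul_le_mul_of_nonneg_right
                (mul_le_mul_of_nonneg_left hpow hCQ0) (by positivity)
      · have hρlt : ρ⁻¹ < 1 := by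
          rw [inv_lt_one_iff₀]; right; exact hρ1
        have : Tendsto (fun n : ℕ => (CQ * (ρ⁻¹) ^ n) * (‖y₀‖ + 1)) atTop (𝓝 ((CQ * 0) * (‖y₀‖ + 1))) :=
          (((tendsto_pow_atTop_nhds_zero_of_lt_one (by positivity) hρlt).const_mul CQ).mul_const _)
        simpa using this
    exact tendsto_nhds_unique h1 h2
  -- conclude
  rw [hQ0] at hQ0x
  have hxP : x - P x = 0 := by
    simpa [ContinuousLinearMap.sub_apply, ContinuousLinearMap.one_apply] using hQ0x
  rw [hP0 x, sub_zero] at hxP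
  exact hx hxP
end

section
/- Let X be a complex Banach space and T a bounded linear operator on X. If the J-set J_T(x) has nonempty interior for some x ∈ X with x ≠ 0, then the operator T − λ·I has dense range for each λ ∈ ℂ with |λ| ≤ 1. -/
open Filter Topology

theorem stmt_8 {X : Type*} [NormedAddCommGroup X] [NormedSpace ℂ X] [CompleteSpace X]
    (T : X →L[ℂ] X) (x : X) (hx : x ≠ 0) (h : (interior (JSet T x)).Nonempty) :
    ∀ lam : ℂ, ‖lam‖ ≤ 1 → DenseRange (T - lam • ContinuousLinearMap.id ℂ X) := by
  intro lam hlam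
  by_contra hd
  set S := T - lam • ContinuousLinearMap.id ℂ X with hSdef
  set p : Submodule ℂ X := (LinearMap.range (S : X →ₗ[ℂ] X)).topologicalClosure with hpdef
  haveI hpc : IsClosed (p : Set X) := (LinearMap.range (S : X →ₗ[ℂ] X)).isClosed_topologicalClosure
  have hne : p ≠ ⊤ := by
    intro hp
    apply hd
    have : closure (Set.range S) = Set.univ := by
      have := congrArg (fun q : Submodule ℂ X => (q : Set X)) hp
      simpa [hpdef, Submodule.topologicalClosure_coe, LinearMap.coe_range, ContinuousLinearMap.coe_coe] using this
    rw [denseRange_iff_closure_range, this]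
  obtain ⟨y₀, hy₀⟩ : ∃ y₀, y₀ ∉ p := by
    by_contra h'
    push_neg at h'
    exact hne (Submodule.eq_top_iff'.mpr h')
  let Q : X →L[ℂ] (X ⧸ p) := ⟨p.mkQ, continuous_quot_mk⟩
  have hQy : Q y₀ ≠ 0 := by
    intro hq; exact hy₀ ((Submodule.Quotient.mk_eq_zero p).mp hq)
  obtain ⟨g, hg1, hgy⟩ := exists_dual_vector ℂ (Q y₀) (norm_ne_zero_iff.mpr hQy)
  set f : X →L[ℂ] ℂ := g.comp Q with hfdef
  have hfy₀ : f y₀ ≠ 0 := by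
    have : f y₀ = (‖Q y₀‖ : ℂ) := hgy
    rw [this]
    exact_mod_cast norm_ne_zero_iff.mpr hQy
  have hfS : ∀ z, f (S z) = 0 := by
    intro z
    have hz : S z ∈ p := (LinearMap.range (S : X →ₗ[ℂ] X)).le_topologicalClosure (LinearMap.mem_range_self _ z)
    have : Q (S z) = 0 := (Submodule.Quotient.mk_eq_zero p).mpr hz
    simp [hfdef, ContinuousLinearMap.comp_apply, this]
  have hT : ∀ z, f (T z) = lam * f z := by
    intro z
    have h0 := hfS z
    have : f (T z) - lam * f z = 0 := by
      simpa [hSdef, ContinuousLinearMap.sub_apply, ContinuousLinearMap.smul_apply,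
        ContinuousLinearMap.id_apply, map_sub, map_smul, smul_eq_mul] using h0
    exact sub_eq_zero.mp this
  have hpow : ∀ (k : ℕ) (z : X), f ((T ^ k) z) = lam ^ k * f z := by
    intro k
    induction k with
    | zero => intro z; simp
    | succ n ih =>
      intro z
      have : (T ^ (n + 1)) z = (T ^ n) (T z) := by
        rw [pow_succ]; rfl
      rw [this, ih (T z), hT z, pow_succ]
      ring
  -- constant modulus on the J-set
  obtain ⟨c, hc⟩ : ∃ c : ℝ, ∀ y ∈ JSet T x, ‖f y‖ = c := by
    rcases lt_or_eq_of_le hlam with hlt | heq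
    · refine ⟨0, ?_⟩
      rintro y ⟨k, hk, u, hu, hTu⟩
      have h1 : Tendsto (fun n => f ((T ^ k n) (u n))) atTop (𝓝 (f y)) :=
        (f.continuous.tendsto y).comp hTu
      have h2 : Tendsto (fun n => lam ^ k n * f (u n)) atTop (𝓝 (0 * f x)) :=
        Tendsto.mul ((tendsto_pow_atTop_nhds_zero_of_norm_lt_one hlt).comp hk.tendsto_atTop)
          ((f.continuous.tendsto x).comp hu)
      have heqfun : (fun n => f ((T ^ k n) (u n))) = fun n => lam ^ k n * f (u n) :=
        funext fun n => hpow (k n) (u n)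
      have : f y = 0 * f x := tendsto_nhds_unique (heqfun ▸ h1) h2
      rw [this]; simp
    · refine ⟨‖f x‖, ?_⟩
      rintro y ⟨k, hk, u, hu, hTu⟩
      have h1 : Tendsto (fun n => ‖f ((T ^ k n) (u n))‖) atTop (𝓝 ‖f y‖) :=
        ((continuous_norm.tendsto _).comp ((f.continuous.tendsto y).comp hTu))
      have h2 : Tendsto (fun n => ‖f (u n)‖) atTop (𝓝 ‖f x‖) :=
        ((continuous_norm.tendsto _).comp ((f.continuous.tendsto x).comp hu))
      have heqfun : (fun n => ‖f ((T ^ k n) (u n))‖) = fun n => ‖f (u n)‖ := by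
        funext n
        rw [hpow (k n) (u n), norm_mul, norm_pow, heq, one_pow, one_mul]
      exact tendsto_nhds_unique (heqfun ▸ h1) h2
  obtain ⟨y₁, hy₁⟩ := h
  obtain ⟨r, hr, hball⟩ := Metric.isOpen_iff.mp isOpen_interior y₁ hy₁
  have hmem : ∀ t : ℂ, ‖t‖ * ‖y₀‖ < r → ‖f y₁ + t * f y₀‖ = c := by
    intro t ht
    have hmem' : y₁ + t • y₀ ∈ JSet T x := by
      apply interior_subset
      apply hball
      simp only [Metric.mem_ball, dist_eq_norm, add_sub_cancel_left]
      calc ‖t • y₀‖ = ‖t‖ * ‖y₀‖ := norm_smul t y₀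
        _ < r := ht
    have := hc _ hmem'
    simpa [map_add, map_smul, smul_eq_mul] using this
  have hc1 : ‖f y₁‖ = c := by
    have := hmem 0 (by simpa using hr)
    simpa using this
  set δ : ℝ := (r * ‖f y₀‖) / (2 * (‖y₀‖ + 1)) with hδdef
  have hfy₀pos : 0 < ‖f y₀‖ := norm_pos_iff.mpr hfy₀
  have hy₀pos : 0 < ‖y₀‖ + 1 := by positivity
  have hδpos : 0 < δ := by positivity
  set t : ℂ := (δ : ℂ) / f y₀ with htdef
  have htf : t * f y₀ = (δ : ℂ) := div_mul_cancel₀ _ hfy₀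
  have htn : ‖t‖ * ‖y₀‖ < r := by
    have h1 : ‖t‖ = δ / ‖f y₀‖ := by
      rw [htdef, norm_div, Complex.norm_real, Real.norm_eq_abs, abs_of_pos hδpos]
    rw [h1, hδdef, div_div, div_mul_eq_mul_div, div_lt_iff₀ (by positivity)]
    nlinarith [norm_nonneg y₀, mul_pos hr hfy₀pos]
  have hplus : ‖f y₁ + (δ : ℂ)‖ = c := by
    have := hmem t htn
    rwa [htf] at this
  have hminus : ‖f y₁ - (δ : ℂ)‖ = c := by
    have htn' : ‖-t‖ * ‖y₀‖ < r := by rwa [norm_neg]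
    have := hmem (-t) htn'
    rw [neg_mul, htf] at this
    rwa [← sub_eq_add_neg] at this
  have hpar := parallelogram_law_with_norm ℂ (f y₁) ((δ : ℂ))
  rw [hplus, hminus, hc1, Complex.norm_real, Real.norm_eq_abs, abs_of_pos hδpos] at hpar
  nlinarith [hδpos]
end

section
/- Let X be a non-separable reflexive Banach space and Y ⊆ X a separable closed subspace. Then there exists a separable closed subspace W of X containing Y and a bounded linear projection P : X → X with range W (i.e. P∘P = P and P(X) = W) such that ‖P‖ = 1. -/
open Filter Topology

set_option maxHeartbeats 2000000
set_option synthInstance.maxHeartbeats 1000000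
set_option maxSynthPendingDepth 3

open Filter Topology

section Aux

variable {X : Type*} [NormedAddCommGroup X] [NormedSpace ℝ X]

lemma aux_ann (W : Submodule ℝ X) (hWc : IsClosed (W : Set X)) {z : X} (hz : z ∉ W) :
    ∃ g : X →L[ℝ] ℝ, (∀ w ∈ W, g w = 0) ∧ g z ≠ 0 := by
  obtain ⟨f, u, hfW, hu⟩ := geometric_hahn_banach_closed_point W.convex hWc hz
  have h0 : (0:ℝ) < u := by simpa using hfW 0 W.zero_mem
  refine ⟨f, ?_, ?_⟩
  · intro w hw
    by_contra h
    have h1 : f (((u+1)/(f w)) • w) < u := hfW _ (W.smul_mem _ hw)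
    rw [map_smul, smul_eq_mul, div_mul_cancel₀ _ h] at h1
    linarith
  · intro h; rw [h] at hu; linarith

lemma aux_av (f : X →L[ℝ] ℝ) (ε : ℝ) (hε : 0 < ε) :
    ∃ v : X, ‖v‖ ≤ 1 ∧ ‖f‖ - ε ≤ ‖f v‖ := by
  by_contra h
  push_neg at h
  have hc : 0 < ‖f‖ - ε := by simpa using h 0 (by simp)
  have hb : ∀ v : X, ‖f v‖ ≤ (‖f‖ - ε) * ‖v‖ := by
    intro v
    rcases eq_or_ne v 0 with rfl | hv
    · simp
    · have hvpos : 0 < ‖v‖ := norm_pos_iff.mpr hv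
      have h1 : ‖(‖v‖⁻¹ • v)‖ ≤ 1 := by
        rw [norm_smul, norm_inv, norm_norm, inv_mul_cancel₀ (norm_ne_zero_iff.mpr hv)]
      have h2 := h _ h1
      rw [map_smul, norm_smul, norm_inv, norm_norm] at h2
      have h3 : ‖f v‖ = ‖v‖ * (‖v‖⁻¹ * ‖f v‖) := by field_simp
      rw [h3, mul_comm (‖f‖ - ε) ‖v‖]
      exact mul_le_mul_of_nonneg_left h2.le hvpos.le
  have := f.opNorm_le_bound (by linarith) hb
  linarith

end Aux

theorem stmt_14 {X : Type*} [NormedAddCommGroup X] [NormedSpace ℝ X] [CompleteSpace X]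
    (hX : ¬ TopologicalSpace.SeparableSpace X)
    (hrefl : Function.Surjective (NormedSpace.inclusionInDoubleDual ℝ X))
    (Y : Submodule ℝ X) (hYc : IsClosed (Y : Set X))
    (hYs : TopologicalSpace.IsSeparable (Y : Set X)) :
    ∃ W : Submodule ℝ X, IsClosed (W : Set X) ∧ TopologicalSpace.IsSeparable (W : Set X) ∧
      Y ≤ W ∧ ∃ P : X →L[ℝ] X, P ∘L P = P ∧ Set.range P = (W : Set X) ∧ ‖P‖ = 1 := by
  classical
  have hnt : Nontrivial X := by
    by_contra h
    rw [not_nontrivial_iff_subsingleton] at h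
    exact hX inferInstance
  obtain ⟨x0, hx0⟩ := exists_ne (0 : X)
  -- norming functionals
  choose nf hnf1 hnf2 using fun a : X => exists_dual_vector' ℝ a
  -- almost-norming vectors
  have hnf2r : ∀ a : X, nf a a = ‖a‖ := fun a => by exact_mod_cast hnf2 a
  choose av hav1 hav2 using fun (f : X →L[ℝ] ℝ) (k : ℕ) =>
    aux_av f (1/(k+1 : ℝ)) (by positivity)
  -- countable dense subsets of spans
  have hdX' : ∀ s : Set X, ∃ c : Set X,
      s.Countable → (c.Countable ∧ (Submodule.span ℝ s : Set X) ⊆ closure c) := by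
    intro s
    by_cases hs : s.Countable
    · obtain ⟨c, hc1, hc2⟩ := hs.isSeparable.span (R := ℝ)
      exact ⟨c, fun _ => ⟨hc1, hc2⟩⟩
    · exact ⟨∅, fun h => absurd h hs⟩
  choose dX hdX using hdX'
  have hdF' : ∀ s : Set (X →L[ℝ] ℝ), ∃ c : Set (X →L[ℝ] ℝ),
      s.Countable → (c.Countable ∧ (Submodule.span ℝ s : Set (X →L[ℝ] ℝ)) ⊆ closure c) := by
    intro s
    by_cases hs : s.Countable
    · obtain ⟨c, hc1, hc2⟩ := hs.isSeparable.span (R := ℝ)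
      exact ⟨c, fun _ => ⟨hc1, hc2⟩⟩
    · exact ⟨∅, fun h => absurd h hs⟩
  choose dF hdF using hdF'
  obtain ⟨c0, hc0ct, hc0⟩ := hYs
  -- the recursion
  obtain ⟨AB, hAB0, hABs⟩ : ∃ AB : ℕ → Set X × Set (X →L[ℝ] ℝ),
      AB 0 = (c0 ∪ {x0}, ∅) ∧ ∀ n, AB (n+1) =
        ((AB n).1 ∪ ⋃ f ∈ dF (AB n).2, Set.range (av f),
         (AB n).2 ∪ nf '' (dX (AB n).1)) :=
    ⟨fun n => Nat.rec (c0 ∪ {x0}, (∅ : Set (X →L[ℝ] ℝ)))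
      (fun _ p => (p.1 ∪ ⋃ f ∈ dF p.2, Set.range (av f), p.2 ∪ nf '' (dX p.1))) n,
      rfl, fun _ => rfl⟩
  have hct : ∀ n, (AB n).1.Countable ∧ (AB n).2.Countable := by
    intro n
    induction n with
    | zero =>
      rw [hAB0]
      exact ⟨hc0ct.union (Set.countable_singleton _), Set.countable_empty⟩
    | succ n ih =>
      rw [hABs n]
      exact ⟨ih.1.union (Set.Countable.biUnion ((hdF _ ih.2).1)
          fun f _ => Set.countable_range _),
        ih.2.union (((hdX _ ih.1).1).image _)⟩
  set U : Set X := ⋃ n, (AB n).1 with hU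
  set V : Set (X →L[ℝ] ℝ) := ⋃ n, (AB n).2 with hV
  set W : Submodule ℝ X := (Submodule.span ℝ U).topologicalClosure with hWdef
  set F : Submodule ℝ (X →L[ℝ] ℝ) := (Submodule.span ℝ V).topologicalClosure with hFdef
  have hWcoe : (W : Set X) = closure (Submodule.span ℝ U : Set X) :=
    Submodule.topologicalClosure_coe _
  have hFcoe : (F : Set (X →L[ℝ] ℝ)) = closure (Submodule.span ℝ V : Set (X →L[ℝ] ℝ)) :=
    Submodule.topologicalClosure_coe _
  have hWc : IsClosed (W : Set X) := Submodule.isClosed_topologicalClosure _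
  have hWsep : TopologicalSpace.IsSeparable (W : Set X) := by
    rw [hWcoe]
    exact (((Set.countable_iUnion fun n => (hct n).1).isSeparable).span).closure
  have hsubW : ∀ n, (AB n).1 ⊆ (W : Set X) := by
    intro n a ha
    rw [hWcoe]
    exact subset_closure (Submodule.subset_span (Set.mem_iUnion.mpr ⟨n, ha⟩))
  have hsubF : ∀ n, (AB n).2 ⊆ (F : Set (X →L[ℝ] ℝ)) := by
    intro n f hf
    rw [hFcoe]
    exact subset_closure (Submodule.subset_span (Set.mem_iUnion.mpr ⟨n, hf⟩))
  have hYW : Y ≤ W := by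
    intro y hy
    have h2 : c0 ⊆ (W : Set X) := by
      intro a ha
      exact hsubW 0 (by rw [hAB0]; exact Or.inl ha)
    have : (y : X) ∈ closure (W : Set X) := closure_mono h2 (hc0 hy)
    rwa [hWc.closure_eq] at this
  have hmonA : Monotone fun n => (AB n).1 :=
    monotone_nat_of_le_succ fun n => by rw [hABs n]; exact Set.subset_union_left
  have hmonB : Monotone fun n => (AB n).2 :=
    monotone_nat_of_le_succ fun n => by rw [hABs n]; exact Set.subset_union_left
  -- density of the chosen countable sets
  have hWC : (W : Set X) ⊆ closure (⋃ n, dX (AB n).1) := by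
    rw [hWcoe]
    refine closure_minimal ?_ isClosed_closure
    intro a ha
    rw [hU, Submodule.span_iUnion] at ha
    have hdir : Directed (· ≤ ·) fun n => Submodule.span ℝ (AB n).1 :=
      (Monotone.directed_le fun n m hnm => Submodule.span_mono (hmonA hnm))
    obtain ⟨n, hn⟩ := (Submodule.mem_iSup_of_directed _ hdir).mp ha
    exact closure_mono (Set.subset_iUnion (fun n => dX (AB n).1) n) ((hdX _ (hct n).1).2 hn)
  have hFD : (F : Set (X →L[ℝ] ℝ)) ⊆ closure (⋃ n, dF (AB n).2) := by
    rw [hFcoe]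
    refine closure_minimal ?_ isClosed_closure
    intro a ha
    rw [hV, Submodule.span_iUnion] at ha
    have hdir : Directed (· ≤ ·) fun n => Submodule.span ℝ (AB n).2 :=
      (Monotone.directed_le fun n m hnm => Submodule.span_mono (hmonB hnm))
    obtain ⟨n, hn⟩ := (Submodule.mem_iSup_of_directed _ hdir).mp ha
    exact closure_mono (Set.subset_iUnion (fun n => dF (AB n).2) n) ((hdF _ (hct n).2).2 hn)
  -- the norming functionals of chosen points belong to F
  have hnfF : ∀ n, ∀ a ∈ dX (AB n).1, nf a ∈ F := by
    intro n a ha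
    refine hsubF (n+1) ?_
    rw [hABs n]
    exact Or.inr ⟨a, ha, rfl⟩
  -- the almost-norming vectors of chosen functionals belong to W
  have havW : ∀ n, ∀ f ∈ dF (AB n).2, ∀ k, av f k ∈ W := by
    intro n f hf k
    refine hsubW (n+1) ?_
    rw [hABs n]
    exact Or.inr (Set.mem_biUnion hf ⟨k, rfl⟩)
  -- F separates points of W
  have huniq : ∀ w, w ∈ W → (∀ f ∈ F, f w = 0) → w = 0 := by
    intro w hw hf0
    have hwn : ∀ ε : ℝ, 0 < ε → ‖w‖ < ε := by
      intro ε hε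
      have hwc := hWC hw
      rw [Metric.mem_closure_iff] at hwc
      obtain ⟨a, ha, hd⟩ := hwc (ε/2) (by linarith)
      obtain ⟨n, han⟩ := Set.mem_iUnion.mp ha
      have h1 : nf a w = 0 := hf0 _ (hnfF n a han)
      have h2 : ‖a‖ = nf a (a - w) := by rw [map_sub, h1, sub_zero, hnf2r]
      have h3 : ‖a‖ ≤ ‖a - w‖ := by
        rw [h2]
        calc nf a (a - w) ≤ ‖nf a (a - w)‖ := le_abs_self _
          _ ≤ ‖nf a‖ * ‖a - w‖ := (nf a).le_opNorm _
          _ = ‖a - w‖ := by rw [hnf1, one_mul]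
      have hd2 : ‖w - a‖ < ε/2 := by rwa [dist_eq_norm] at hd
      have h4 : ‖a - w‖ = ‖w - a‖ := norm_sub_rev _ _
      calc ‖w‖ = ‖(w - a) + a‖ := by rw [sub_add_cancel]
        _ ≤ ‖w - a‖ + ‖a‖ := norm_add_le _ _
        _ < ε := by rw [h4] at h3; linarith
    by_contra h
    exact lt_irrefl _ (hwn ‖w‖ (norm_pos_iff.mpr h))
  clear_value U V W F
  -- restriction map to W
  set ρ : (X →L[ℝ] ℝ) →ₗ[ℝ] (W →L[ℝ] ℝ) :=
    { toFun := fun f => f.comp W.subtypeL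
      map_add' := fun f g => ContinuousLinearMap.add_comp f g _
      map_smul' := fun c f => ContinuousLinearMap.smul_comp c f _ } with hρdef
  have hρapp : ∀ (f : X →L[ℝ] ℝ) (w : W), ρ f w = f (w : X) := fun f w => rfl
  have hρ_le : ∀ f, ‖ρ f‖ ≤ ‖f‖ := by
    intro f
    refine ContinuousLinearMap.opNorm_le_bound _ (norm_nonneg f) fun w => ?_
    calc ‖ρ f w‖ = ‖f (w : X)‖ := rfl
      _ ≤ ‖f‖ * ‖(w : X)‖ := f.le_opNorm _
      _ = ‖f‖ * ‖w‖ := rfl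
  set ρc : (X →L[ℝ] ℝ) →L[ℝ] (↥W →L[ℝ] ℝ) :=
    LinearMap.mkContinuous (F := ↥W →L[ℝ] ℝ) ρ 1 (fun f => by simpa using hρ_le f) with hρc
  have hρc_app : ∀ f, ρc f = ρ f := fun f => rfl
  have hρc_le : ‖ρc‖ ≤ 1 :=
    LinearMap.mkContinuous_norm_le (F := ↥W →L[ℝ] ℝ) ρ zero_le_one _
  -- W almost norms the chosen functionals
  have hrestD : ∀ n, ∀ f ∈ dF (AB n).2, ‖f‖ ≤ ‖ρ f‖ := by
    intro n f hf
    by_contra h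
    push_neg at h
    obtain ⟨k, hk⟩ := exists_nat_one_div_lt (sub_pos.mpr h)
    have hmem : av f k ∈ W := havW n f hf k
    have h2 : ‖f (av f k)‖ ≤ ‖ρ f‖ := by
      calc ‖f (av f k)‖ = ‖ρ f ⟨av f k, hmem⟩‖ := rfl
        _ ≤ ‖ρ f‖ * ‖(⟨av f k, hmem⟩ : W)‖ := (ρ f).le_opNorm _
        _ ≤ ‖ρ f‖ * 1 := by
            refine mul_le_mul_of_nonneg_left ?_ (norm_nonneg (ρ f))
            exact hav1 f k
        _ = ‖ρ f‖ := mul_one _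
    have h3 := hav2 f k
    linarith
  -- W norms all of F
  have hrestF : ∀ f ∈ F, ‖f‖ ≤ ‖ρ f‖ := by
    intro f hf
    refine le_of_forall_pos_le_add fun ε hε => ?_
    have hfc := hFD hf
    rw [Metric.mem_closure_iff] at hfc
    obtain ⟨g, hg, hd⟩ := hfc (ε/2) (by linarith)
    obtain ⟨n, hgn⟩ := Set.mem_iUnion.mp hg
    have h1 : ‖g‖ ≤ ‖ρ g‖ := hrestD n g hgn
    have h2 : ‖ρ g - ρ f‖ ≤ ‖g - f‖ := by rw [← map_sub]; exact hρ_le _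
    have h3 : ‖f‖ - ‖g‖ ≤ ‖f - g‖ := norm_sub_norm_le _ _
    have h4 : ‖ρ g‖ - ‖ρ f‖ ≤ ‖ρ g - ρ f‖ := norm_sub_norm_le (ρ g) (ρ f)
    have hd' : ‖f - g‖ < ε/2 := by rwa [dist_eq_norm] at hd
    have h5 : ‖g - f‖ = ‖f - g‖ := norm_sub_rev _ _
    linarith
  have hinjF : ∀ f ∈ F, ρ f = 0 → f = 0 := by
    intro f hf h0
    have h1 := hrestF f hf
    rw [h0] at h1
    have h2 : ‖(0 : ↥W →L[ℝ] ℝ)‖ = 0 := ContinuousLinearMap.opNorm_zero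
    exact norm_le_zero_iff.mp (h2 ▸ h1)
  -- existence of the projection value
  have hex : ∀ x : X, ∃ w, w ∈ W ∧ ‖w‖ ≤ ‖x‖ ∧ ∀ f ∈ F, f w = f x := by
    intro x
    set G : Submodule ℝ (W →L[ℝ] ℝ) := F.map ρ with hG
    have hpre : ∀ g : G, ∃ f, f ∈ F ∧ ρ f = (g : W →L[ℝ] ℝ) := by
      intro g
      obtain ⟨f, hf1, hf2⟩ := Submodule.mem_map.mp g.2
      exact ⟨f, hf1, hf2⟩
    choose pre hpreF hpreρ using hpre
    have hpre_eq : ∀ (g : G) (f), f ∈ F → ρ f = (g : W →L[ℝ] ℝ) → pre g = f := by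
      intro g f hf hρf
      have h1 : ρ (pre g - f) = 0 := by rw [map_sub, hpreρ, hρf, sub_self]
      exact sub_eq_zero.mp (hinjF _ (F.sub_mem (hpreF g) hf) h1)
    set ψl : G →ₗ[ℝ] ℝ :=
      { toFun := fun g => pre g x
        map_add' := by
          intro g h
          show pre (g + h) x = pre g x + pre h x
          have h1 : pre (g + h) = pre g + pre h := by
            refine hpre_eq _ _ (F.add_mem (hpreF g) (hpreF h)) ?_
            rw [map_add, hpreρ, hpreρ]
            rfl
          rw [h1]
          simp
        map_smul' := by
          intro c g
          show pre (c • g) x = c • pre g x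
          have h1 : pre (c • g) = c • pre g := by
            refine hpre_eq _ _ (F.smul_mem c (hpreF g)) ?_
            rw [map_smul, hpreρ]
            rfl
          rw [h1]
          simp } with hψl
    have hψb : ∀ g : G, ‖ψl g‖ ≤ ‖x‖ * ‖g‖ := by
      intro g
      have h1 : ‖pre g x‖ ≤ ‖pre g‖ * ‖x‖ := (pre g).le_opNorm x
      have h2 : ‖pre g‖ ≤ ‖ρ (pre g)‖ := hrestF _ (hpreF g)
      rw [hpreρ] at h2
      calc ‖ψl g‖ = ‖pre g x‖ := rfl
        _ ≤ ‖pre g‖ * ‖x‖ := h1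
        _ ≤ ‖g‖ * ‖x‖ := mul_le_mul_of_nonneg_right h2 (norm_nonneg x)
        _ = ‖x‖ * ‖g‖ := mul_comm _ _
    have hψn : ‖(LinearMap.mkContinuous (E := G) ψl ‖x‖ hψb : ↥G →L[ℝ] ℝ)‖ ≤ ‖x‖ :=
      LinearMap.mkContinuous_norm_le (E := G) ψl (norm_nonneg x) hψb
    set ψ : G →L[ℝ] ℝ := LinearMap.mkContinuous (E := G) ψl ‖x‖ hψb with hψ
    obtain ⟨Ψ, hΨ1, hΨ2⟩ := exists_extension_norm_eq (𝕜 := ℝ) (E := ↥W →L[ℝ] ℝ) G ψ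
    have hΨn : ‖Ψ‖ ≤ ‖x‖ := by rw [hΨ2]; exact hψn
    set Φ : StrongDual ℝ (StrongDual ℝ X) := Ψ.comp ρc with hΦ
    obtain ⟨z, hz⟩ := hrefl Φ
    have hzval : ∀ g : X →L[ℝ] ℝ, g z = Ψ (ρ g) := by
      intro g
      have h1 : NormedSpace.inclusionInDoubleDual ℝ X z g = g z := rfl
      rw [← h1, hz]
      rfl
    have hzW : z ∈ W := by
      by_contra hzw
      obtain ⟨g, hg0, hgz⟩ := aux_ann W hWc hzw
      have h1 : ρ g = 0 := by
        ext w
        exact hg0 _ w.2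
      have h2 := hzval g
      rw [h1, map_zero] at h2
      exact hgz h2
    have hzF : ∀ f ∈ F, f z = f x := by
      intro f hf
      have hmem : ρ f ∈ G := Submodule.mem_map_of_mem hf
      have h1 : f z = Ψ (ρ f) := hzval f
      have h2 : Ψ (ρ f) = ψ ⟨ρ f, hmem⟩ := hΨ1 ⟨ρ f, hmem⟩
      have h3 : ψ ⟨ρ f, hmem⟩ = pre ⟨ρ f, hmem⟩ x := rfl
      have h4 : pre ⟨ρ f, hmem⟩ = f := hpre_eq _ f hf rfl
      rw [h1, h2, h3, h4]
    have hzn : ‖z‖ ≤ ‖x‖ := by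
      refine NormedSpace.norm_le_dual_bound ℝ z (norm_nonneg x) fun g => ?_
      rw [hzval g]
      calc ‖Ψ (ρ g)‖ ≤ ‖Ψ‖ * ‖ρ g‖ := Ψ.le_opNorm _
        _ ≤ ‖x‖ * ‖g‖ :=
            mul_le_mul hΨn (hρ_le g) (norm_nonneg (ρ g)) (norm_nonneg x)
    exact ⟨z, hzW, hzn, hzF⟩
  -- the projection
  have huniq2 : ∀ (x w w' : X), w ∈ W → w' ∈ W → (∀ f ∈ F, f w = f x) →
      (∀ f ∈ F, f w' = f x) → w = w' := by
    intro x w w' hw hw' h1 h2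
    refine sub_eq_zero.mp (huniq (w - w') (W.sub_mem hw hw') fun f hf => ?_)
    rw [map_sub, h1 f hf, h2 f hf, sub_self]
  choose p hpW hpn hpF using hex
  have hp_eq : ∀ x w, w ∈ W → (∀ f ∈ F, f w = f x) → p x = w :=
    fun x w hw hfw => huniq2 x _ _ (hpW x) hw (hpF x) hfw
  set Pl : X →ₗ[ℝ] X :=
    { toFun := p
      map_add' := by
        intro x y
        refine hp_eq (x+y) (p x + p y) (W.add_mem (hpW x) (hpW y)) fun f hf => ?_
        rw [map_add, hpF x f hf, hpF y f hf, map_add]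
      map_smul' := by
        intro c x
        refine hp_eq (c • x) (c • p x) (W.smul_mem c (hpW x)) fun f hf => ?_
        rw [map_smul, hpF x f hf, map_smul] } with hPl
  set P : X →L[ℝ] X := Pl.mkContinuous 1 (fun x => by rw [one_mul]; exact hpn x) with hP
  have hPapp : ∀ x, P x = p x := fun x => rfl
  have hPfix : ∀ w ∈ W, P w = w := fun w hw => hp_eq w w hw fun f hf => rfl
  refine ⟨W, hWc, hWsep, hYW, P, ?_, ?_, ?_⟩
  · ext x
    show P (P x) = P x
    refine hPfix (P x) ?_
    rw [hPapp]
    exact hpW x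
  · refine Set.Subset.antisymm ?_ ?_
    · rintro _ ⟨x, rfl⟩
      exact hpW x
    · intro w hw
      exact ⟨w, hPfix w hw⟩
  · refine le_antisymm (Pl.mkContinuous_norm_le zero_le_one _) ?_
    have hx0W : x0 ∈ W := hsubW 0 (by rw [hAB0]; exact Or.inr rfl)
    have h1 : P x0 = x0 := hPfix x0 hx0W
    have h2 := P.le_opNorm x0
    rw [h1] at h2
    exact (le_mul_iff_one_le_left (norm_pos_iff.mpr hx0)).mp h2
end

section
/- Let X be a Banach space, T a bounded linear operator on X, and M₁, M₂ closed T-invariant subspaces with X = M₁ ⊕ M₂ (every x ∈ X has a unique decomposition x = x₁ + x₂ with x₁ ∈ M₁, x₂ ∈ M₂). If x = x₁ + x₂ with x₁ ∈ M₁ and x₂ ∈ M₂, then J_T(x) ⊆ J_{T|M₁}(x₁) + J_{T|M₂}(x₂), where the J-sets of the restrictions T|M₁ and T|M₂ are computed in M₁ and M₂ respectively. -/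
open Filter Topology Pointwise

theorem stmt_16 {X : Type*} [NormedAddCommGroup X] [NormedSpace ℂ X] [CompleteSpace X]
    (T : X →L[ℂ] X) (M₁ M₂ : Submodule ℂ X)
    (hM₁c : IsClosed (M₁ : Set X)) (hM₂c : IsClosed (M₂ : Set X))
    (hinv₁ : ∀ m ∈ M₁, T m ∈ M₁) (hinv₂ : ∀ m ∈ M₂, T m ∈ M₂)
    (hcompl : IsCompl M₁ M₂)
    (T₁ : M₁ →L[ℂ] M₁) (hT₁ : ∀ m : M₁, (T₁ m : X) = T m)
    (T₂ : M₂ →L[ℂ] M₂) (hT₂ : ∀ m : M₂, (T₂ m : X) = T m)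
    (x : X) (x₁ : M₁) (x₂ : M₂) (hx : x = (x₁ : X) + (x₂ : X)) :
    JSet T x ⊆ (Subtype.val '' JSet T₁ x₁) + (Subtype.val '' JSet T₂ x₂) := by
  set P₁ : X →L[ℂ] M₁ := M₁.linearProjOfClosedCompl M₂ hcompl hM₁c hM₂c with hP₁
  set P₂ : X →L[ℂ] M₂ := M₂.linearProjOfClosedCompl M₁ hcompl.symm hM₂c hM₁c with hP₂
  have hP₁l : ∀ m : M₁, P₁ (m : X) = m := fun m =>
    Submodule.linearProjOfIsCompl_apply_left hcompl m
  have hP₁r : ∀ m : M₂, P₁ (m : X) = 0 := fun m =>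
    Submodule.linearProjOfIsCompl_apply_right hcompl m
  have hP₂l : ∀ m : M₂, P₂ (m : X) = m := fun m =>
    Submodule.linearProjOfIsCompl_apply_left hcompl.symm m
  have hP₂r : ∀ m : M₁, P₂ (m : X) = 0 := fun m =>
    Submodule.linearProjOfIsCompl_apply_right hcompl.symm m
  have hdecomp : ∀ z : X, z = (P₁ z : X) + (P₂ z : X) := by
    intro z
    have := Submodule.projection_add_projection_eq_self hcompl z
    rw [Submodule.projection_apply, Submodule.projection_apply] at this
    exact this.symm
  -- commuting relations
  have hcomm₁ : ∀ z : X, P₁ (T z) = T₁ (P₁ z) := by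
    intro z
    conv_lhs => rw [hdecomp z]
    rw [map_add, map_add]
    rw [← hT₁ (P₁ z), ← hT₂ (P₂ z), hP₁l, hP₁r, add_zero]
  have hcomm₂ : ∀ z : X, P₂ (T z) = T₂ (P₂ z) := by
    intro z
    conv_lhs => rw [hdecomp z]
    rw [map_add, map_add]
    rw [← hT₁ (P₁ z), ← hT₂ (P₂ z), hP₂l, hP₂r, zero_add]
  have hpow₁ : ∀ (k : ℕ) (z : X), P₁ ((T ^ k) z) = (T₁ ^ k) (P₁ z) := by
    intro k
    induction k with
    | zero => intro z; simp
    | succ n ih =>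
      intro z
      rw [pow_succ', pow_succ']
      simp only [ContinuousLinearMap.mul_apply]
      rw [hcomm₁ ((T ^ n) z), ih z]
  have hpow₂ : ∀ (k : ℕ) (z : X), P₂ ((T ^ k) z) = (T₂ ^ k) (P₂ z) := by
    intro k
    induction k with
    | zero => intro z; simp
    | succ n ih =>
      intro z
      rw [pow_succ', pow_succ']
      simp only [ContinuousLinearMap.mul_apply]
      rw [hcomm₂ ((T ^ n) z), ih z]
  have hP₁x : P₁ x = x₁ := by rw [hx, map_add, hP₁l, hP₁r, add_zero]
  have hP₂x : P₂ x = x₂ := by rw [hx, map_add, hP₂l, hP₂r, zero_add]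
  rintro y ⟨k, hk, u, hu, hTu⟩
  have hy₁ : P₁ y ∈ JSet T₁ x₁ := by
    refine ⟨k, hk, fun n => P₁ (u n), ?_, ?_⟩
    · rw [← hP₁x]; exact (P₁.continuous.tendsto x).comp hu
    · have : Tendsto (fun n => P₁ ((T ^ k n) (u n))) atTop (𝓝 (P₁ y)) :=
        (P₁.continuous.tendsto y).comp hTu
      simpa only [hpow₁] using this
  have hy₂ : P₂ y ∈ JSet T₂ x₂ := by
    refine ⟨k, hk, fun n => P₂ (u n), ?_, ?_⟩
    · rw [← hP₂x]; exact (P₂.continuous.tendsto x).comp hu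
    · have : Tendsto (fun n => P₂ ((T ^ k n) (u n))) atTop (𝓝 (P₂ y)) :=
        (P₂.continuous.tendsto y).comp hTu
      simpa only [hpow₂] using this
  exact ⟨(P₁ y : X), ⟨P₁ y, hy₁, rfl⟩, (P₂ y : X), ⟨P₂ y, hy₂, rfl⟩, (hdecomp y).symm⟩
end

section
/- Let X be a finite-dimensional complex normed space and T a bounded linear operator on X. Then for every non-zero vector x ∈ X, the J-set J_T(x) has empty interior. -/
open Filter Topology

/-- A level set of the modulus of a nonzero continuous linear functional has empty interior. -/
lemma aux_interior_norm_level {X : Type*} [NormedAddCommGroup X] [NormedSpace ℂ X]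
    (φ : X →L[ℂ] ℂ) {v : X} (hv : φ v = 1) (t : ℝ) (S : Set X)
    (hS : ∀ y ∈ S, ‖φ y‖ = t) : interior S = ∅ := by
  rw [Set.eq_empty_iff_forall_notMem]
  intro y₀ hy₀
  obtain ⟨ε, hε, hball⟩ := Metric.isOpen_iff.1 isOpen_interior y₀ hy₀
  have hvn : (0:ℝ) < ‖v‖ := by
    rcases eq_or_ne v 0 with rfl | h
    · simp at hv
    · exact norm_pos_iff.2 h
  set s : ℝ := ε / (2 * ‖v‖) with hs
  have hs0 : 0 < s := div_pos hε (by positivity)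
  have hsv : ‖(s : ℂ) • v‖ < ε := by
    rw [norm_smul, Complex.norm_real, Real.norm_of_nonneg hs0.le]
    have h2 : s * ‖v‖ = ε / 2 := by
      rw [hs]; field_simp
    rw [h2]; linarith
  have m1 : y₀ + (s:ℂ) • v ∈ S := by
    apply interior_subset; apply hball
    rw [Metric.mem_ball, dist_eq_norm]
    simpa using hsv
  have m2 : y₀ - (s:ℂ) • v ∈ S := by
    apply interior_subset; apply hball
    rw [Metric.mem_ball, dist_eq_norm]
    have : y₀ - (s:ℂ) • v - y₀ = -((s:ℂ) • v) := by abel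
    rw [this, norm_neg]
    exact hsv
  have e0 : ‖φ y₀‖ = t := hS _ (interior_subset hy₀)
  have e1 : ‖φ y₀ + (s:ℂ)‖ = t := by
    have h := hS _ m1
    rwa [map_add, map_smul, hv, smul_eq_mul, mul_one] at h
  have e2 : ‖φ y₀ - (s:ℂ)‖ = t := by
    have h := hS _ m2
    rwa [map_sub, map_smul, hv, smul_eq_mul, mul_one] at h
  have hp := parallelogram_law_with_norm ℂ (φ y₀) ((s:ℂ))
  rw [e1, e2, e0] at hp
  have hns : ‖(s:ℂ)‖ = s := by rw [Complex.norm_real, Real.norm_of_nonneg hs0.le]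
  rw [hns] at hp
  nlinarith

theorem stmt_17 {X : Type*} [NormedAddCommGroup X] [NormedSpace ℂ X]
    [FiniteDimensional ℂ X] (T : X →L[ℂ] X) :
    ∀ x : X, x ≠ 0 → interior (JSet T x) = ∅ := by
  intro x hx
  have hnt : Nontrivial X := nontrivial_of_ne x 0 hx
  have hcs : CompleteSpace X := FiniteDimensional.complete ℂ X
  by_cases hsmall : ∃ (μ : ℂ) (φ : Module.Dual ℂ X), φ ≠ 0 ∧ (∀ v, φ (T v) = μ * φ v) ∧ ‖μ‖ ≤ 1
  · -- Case A : there is an adjoint eigenvalue of modulus at most one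
    obtain ⟨μ, φ, hφ0, heig, hμ⟩ := hsmall
    set ψ : X →L[ℂ] ℂ := LinearMap.toContinuousLinearMap φ with hψ
    have hψa : ∀ w, ψ w = φ w := fun w => rfl
    obtain ⟨v, hv⟩ : ∃ v, φ v ≠ 0 := by
      by_contra h
      push_neg at h
      exact hφ0 (LinearMap.ext fun w => by simp [h w])
    have hv1 : ψ ((φ v)⁻¹ • v) = 1 := by
      rw [hψa, map_smul, smul_eq_mul, inv_mul_cancel₀ hv]
    have hpow : ∀ (k : ℕ) (w : X), ψ ((T ^ k) w) = μ ^ k * ψ w := by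
      intro k
      induction k with
      | zero => intro w; simp
      | succ k ih =>
        intro w
        rw [pow_succ, ContinuousLinearMap.mul_apply, ih, hψa, heig, pow_succ, hψa]
        ring
    set t : ℝ := if ‖μ‖ < 1 then 0 else ‖ψ x‖ with ht
    have key : ∀ y ∈ JSet T x, ‖ψ y‖ = t := by
      rintro y ⟨k, hk, u, hu, hw⟩
      have hky : Tendsto (fun n => μ ^ k n * ψ (u n)) atTop (𝓝 (ψ y)) := by
        have h := (ψ.continuous.tendsto y).comp hw
        have : (fun n => ψ ((T ^ k n) (u n))) = fun n => μ ^ k n * ψ (u n) := by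
          funext n; exact hpow (k n) (u n)
        rwa [← this]
      rcases lt_or_eq_of_le hμ with h1 | h1
      · have hμ0 : Tendsto (fun n => μ ^ k n) atTop (𝓝 0) :=
          (tendsto_pow_atTop_nhds_zero_of_norm_lt_one h1).comp hk.tendsto_atTop
        have h2 : Tendsto (fun n => μ ^ k n * ψ (u n)) atTop (𝓝 (0 * ψ x)) :=
          hμ0.mul ((ψ.continuous.tendsto x).comp hu)
        rw [zero_mul] at h2
        have := tendsto_nhds_unique hky h2
        rw [ht, if_pos h1, this, norm_zero]
      · have habs : Tendsto (fun n => ‖μ ^ k n * ψ (u n)‖) atTop (𝓝 ‖ψ y‖) := hky.norm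
        have habs2 : (fun n => ‖μ ^ k n * ψ (u n)‖) = fun n => ‖ψ (u n)‖ := by
          funext n
          rw [norm_mul, norm_pow, h1, one_pow, one_mul]
        rw [habs2] at habs
        have habs3 : Tendsto (fun n => ‖ψ (u n)‖) atTop (𝓝 ‖ψ x‖) :=
          ((ψ.continuous.tendsto x).comp hu).norm
        have := tendsto_nhds_unique habs habs3
        rw [ht, if_neg (not_lt.2 h1.ge), this]
    exact aux_interior_norm_level ψ hv1 t (JSet T x) key
  · -- Case B : every adjoint eigenvalue has modulus > 1, then the J-set is empty
    push_neg at hsmall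
    have hspec : ∀ lam ∈ spectrum ℂ T, 1 < ‖lam‖ := by
      intro lam hlam
      rw [spectrum.mem_iff] at hlam
      set L : X →L[ℂ] X := algebraMap ℂ (X →L[ℂ] X) lam - T with hL
      have hLns : ¬ Function.Surjective (L : X →ₗ[ℂ] X) := by
        intro hsurj
        apply hlam
        have hbij : Function.Bijective (L : X →ₗ[ℂ] X) :=
          ⟨(LinearMap.injective_iff_surjective).2 hsurj, hsurj⟩
        let e := LinearEquiv.ofBijective (L : X →ₗ[ℂ] X) hbij
        refine isUnit_iff_exists.2 ⟨LinearMap.toContinuousLinearMap (e.symm : X →ₗ[ℂ] X), ?_, ?_⟩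
        · ext w
          simp only [ContinuousLinearMap.mul_apply, ContinuousLinearMap.one_apply,
            LinearMap.coe_toContinuousLinearMap']
          exact e.apply_symm_apply w
        · ext w
          simp only [ContinuousLinearMap.mul_apply, ContinuousLinearMap.one_apply,
            LinearMap.coe_toContinuousLinearMap']
          exact e.symm_apply_apply w
      have hrange : LinearMap.range (L : X →ₗ[ℂ] X) < ⊤ :=
        lt_top_iff_ne_top.2 fun h => hLns (LinearMap.range_eq_top.1 h)
      obtain ⟨φ, hφ0, hφ⟩ := Submodule.exists_dual_map_eq_bot_of_lt_top hrange inferInstance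
      refine hsmall lam φ hφ0 ?_
      intro w
      have hmem : L w ∈ LinearMap.range (L : X →ₗ[ℂ] X) := ⟨w, rfl⟩
      have h0 : φ (L w) = 0 := by
        have : φ (L w) ∈ Submodule.map φ (LinearMap.range (L : X →ₗ[ℂ] X)) :=
          Submodule.mem_map_of_mem hmem
        rw [hφ] at this
        simpa using this
      have hLw : L w = lam • w - T w := by
        rw [hL]
        simp [Algebra.algebraMap_eq_smul_one, ContinuousLinearMap.sub_apply,
          ContinuousLinearMap.smul_apply, ContinuousLinearMap.one_apply]
      rw [hLw, map_sub, map_smul, smul_eq_mul, sub_eq_zero] at h0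
      exact h0.symm
    have hTu : IsUnit T := by
      by_contra h
      have h0 : (0:ℂ) ∈ spectrum ℂ T := (spectrum.zero_mem_iff ℂ).2 h
      exact absurd (hspec 0 h0) (by norm_num)
    obtain ⟨U, hU⟩ := hTu
    have hntL : Nontrivial (X →L[ℂ] X) := by
      refine ⟨1, 0, fun h => hx ?_⟩
      have := DFunLike.congr_fun h x
      simpa using this
    set a : X →L[ℂ] X := ↑U⁻¹ with ha
    have hρ : spectralRadius ℂ a < 1 := by
      have : spectralRadius ℂ a < (1 : NNReal) := by
        apply spectrum.spectralRadius_lt_of_forall_lt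
        intro z hz
        have hzmem : z⁻¹ ∈ spectrum ℂ (↑U : X →L[ℂ] X) := by
          rw [← spectrum.map_inv U] at hz
          exact Set.mem_inv.1 hz
        have h1z : 1 < ‖z⁻¹‖ := hspec _ (by rwa [hU] at hzmem)
        have hz0 : z ≠ 0 := by
          rintro rfl
          simp at h1z
          linarith
        rw [norm_inv] at h1z
        have : ‖z‖ < 1 := by
          rw [← inv_inv (1:ℝ)] at h1z ⊢
          have := (one_lt_inv_iff₀).1 (by simpa using h1z)
          simpa using this.2
        exact_mod_cast this
      simpa using this
    -- The powers of a tend to zero in norm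
    have hnorm0 : Tendsto (fun n : ℕ => ‖a ^ n‖) atTop (𝓝 0) := by
      obtain ⟨r, hr1, hr2⟩ := exists_between hρ
      have hrne : r ≠ ⊤ := hr2.ne_top
      have hgel := spectrum.pow_norm_pow_one_div_tendsto_nhds_spectralRadius a
      have hev : ∀ᶠ n : ℕ in atTop, ENNReal.ofReal (‖a ^ n‖ ^ (1 / (n:ℝ))) < r :=
        hgel.eventually_lt_const hr1
      have hrr1 : r.toReal < 1 := by
        have := (ENNReal.toReal_lt_toReal hrne (by norm_num)).2 hr2
        simpa using this
      have hrr0 : 0 ≤ r.toReal := ENNReal.toReal_nonneg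
      have hbound : ∀ᶠ n : ℕ in atTop, ‖a ^ n‖ ≤ r.toReal ^ n := by
        filter_upwards [hev, eventually_ge_atTop 1] with n hn hn1
        have hlt : ‖a ^ n‖ ^ (1 / (n:ℝ)) < r.toReal :=
          (ENNReal.ofReal_lt_iff_lt_toReal (by positivity) hrne).1 hn
        have hn0 : (n:ℝ) ≠ 0 := by positivity
        have : (‖a ^ n‖ ^ (1 / (n:ℝ))) ^ n ≤ r.toReal ^ n :=
          pow_le_pow_left₀ (by positivity) hlt.le n
        rwa [one_div, Real.rpow_inv_natCast_pow (norm_nonneg _) (by omega)] at this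
      have hr0 : Tendsto (fun n : ℕ => r.toReal ^ n) atTop (𝓝 0) :=
        tendsto_pow_atTop_nhds_zero_of_lt_one hrr0 hrr1
      exact squeeze_zero' (Eventually.of_forall fun n => norm_nonneg _) hbound hr0
    have hJ : JSet T x = ∅ := by
      rw [Set.eq_empty_iff_forall_notMem]
      rintro y ⟨k, hk, u, hu, hw⟩
      have hinv : ∀ n, u n = (a ^ k n) ((T ^ k n) (u n)) := by
        intro n
        have h1 : a ^ k n * T ^ k n = 1 := by
          rw [ha, ← hU]
          calc (↑U⁻¹ : X →L[ℂ] X) ^ k n * (↑U : X →L[ℂ] X) ^ k n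
              = ↑(U⁻¹ ^ k n * U ^ k n) := by
                rw [Units.val_mul, Units.val_pow_eq_pow_val, Units.val_pow_eq_pow_val]
            _ = 1 := by rw [inv_pow, inv_mul_cancel, Units.val_one]
        calc u n = (1 : X →L[ℂ] X) (u n) := rfl
          _ = (a ^ k n * T ^ k n) (u n) := by rw [h1]
          _ = (a ^ k n) ((T ^ k n) (u n)) := rfl
      have hb : Tendsto (fun n => ‖a ^ k n‖ * ‖(T ^ k n) (u n)‖) atTop (𝓝 (0 * ‖y‖)) :=
        (hnorm0.comp hk.tendsto_atTop).mul hw.norm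
      rw [zero_mul] at hb
      have hb2 : Tendsto (fun n => ‖u n‖) atTop (𝓝 0) := by
        refine squeeze_zero (fun n => norm_nonneg _) (fun n => ?_) hb
        conv_lhs => rw [hinv n]
        exact ContinuousLinearMap.le_opNorm _ _
      have hu0 : Tendsto u atTop (𝓝 0) := tendsto_zero_iff_norm_tendsto_zero.2 hb2
      exact hx (tendsto_nhds_unique hu hu0)
    rw [hJ, interior_empty]
end

section
/- Let X be a complex Banach space and T a bounded linear operator on X whose spectrum satisfies σ(T) ⊂ {μ ∈ ℂ : |μ| > 1}. Then T is zero J-class, i.e. J_T(0) = X and J_T(x) ≠ X for every x ≠ 0. -/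
open Filter Topology

/-- If the spectral radius is less than one, the norms of powers tend to zero. -/
theorem aux_pow_norm_tendsto_zero {A : Type*} [NormedRing A] [NormedAlgebra ℂ A] [CompleteSpace A]
    (a : A) (h : spectralRadius ℂ a < 1) : Tendsto (fun n : ℕ => ‖a ^ n‖) atTop (𝓝 0) := by
  obtain ⟨r, hr1, hr2⟩ := exists_between h
  lift r to NNReal using ne_top_of_lt hr2
  have hgel := spectrum.pow_nnnorm_pow_one_div_tendsto_nhds_spectralRadius a
  have hev : ∀ᶠ n : ℕ in atTop, (‖a ^ n‖₊ : ENNReal) ^ (1 / (n : ℝ)) < (r : ENNReal) :=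
    hgel.eventually_lt_const hr1
  have hr2' : (r : ℝ) < 1 := by exact_mod_cast hr2
  have hbound : ∀ᶠ n : ℕ in atTop, ‖a ^ n‖ ≤ (r : ℝ) ^ n := by
    filter_upwards [hev, eventually_ge_atTop 1] with n hn hn1
    have hn0 : (n : ℝ) ≠ 0 := Nat.cast_ne_zero.mpr (by omega)
    have h2 := ENNReal.rpow_lt_rpow hn (by positivity) (z := (n : ℝ))
    rw [← ENNReal.rpow_mul, one_div_mul_cancel hn0, ENNReal.rpow_one,
      ENNReal.rpow_natCast] at h2
    have h3 : ‖a ^ n‖₊ ≤ r ^ n := by exact_mod_cast h2.le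
    calc ‖a ^ n‖ = (‖a ^ n‖₊ : ℝ) := rfl
      _ ≤ ((r ^ n : NNReal) : ℝ) := by exact_mod_cast h3
      _ = (r : ℝ) ^ n := by push_cast; ring
  exact squeeze_zero' (Eventually.of_forall fun n => norm_nonneg _) hbound
    (tendsto_pow_atTop_nhds_zero_of_lt_one (by positivity) hr2')

theorem stmt_18 {X : Type*} [NormedAddCommGroup X] [NormedSpace ℂ X] [CompleteSpace X]
    (T : X →L[ℂ] X) (hspec : spectrum ℂ T ⊆ {μ : ℂ | 1 < ‖μ‖}) :
    JSet T 0 = Set.univ ∧ ∀ x : X, x ≠ 0 → JSet T x ≠ Set.univ := by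
  -- `T` is invertible since `0 ∉ σ(T)`
  have h0 : (0 : ℂ) ∉ spectrum ℂ T := fun h => absurd (hspec h) (by norm_num)
  have hTu : IsUnit T := by
    have := spectrum.notMem_iff.mp h0
    rw [map_zero, zero_sub] at this
    simpa using this.neg
  obtain ⟨u, hu⟩ := hTu
  set S : X →L[ℂ] X := ((u⁻¹ : (X →L[ℂ] X)ˣ) : X →L[ℂ] X) with hS
  -- spectral radius of the inverse is < 1
  have hsub : ∀ z ∈ spectrum ℂ S, ‖z‖₊ < 1 := by
    intro z hz
    rw [hS, ← spectrum.map_inv] at hz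
    rw [Set.mem_inv] at hz
    have hz' : 1 < ‖z⁻¹‖ := hspec (hu ▸ hz)
    rcases eq_or_ne z 0 with rfl | hzne
    · simpa using one_pos
    · have : ‖z‖ < 1 := by
        rw [norm_inv] at hz'
        have hpos : 0 < ‖z‖ := norm_pos_iff.mpr hzne
        rw [lt_inv_comm₀ one_pos hpos] at hz'
        simpa using hz'
      exact_mod_cast this
  have hrad : spectralRadius ℂ S < 1 := by
    by_cases hne : (spectrum ℂ S).Nonempty
    · exact_mod_cast spectrum.spectralRadius_lt_of_forall_lt_of_nonempty hne hsub
    · rw [Set.not_nonempty_iff_eq_empty] at hne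
      simp [spectralRadius, hne]
  have hdecay : Tendsto (fun n : ℕ => ‖S ^ n‖) atTop (𝓝 0) := aux_pow_norm_tendsto_zero S hrad
  -- key algebraic identities
  have hTS : ∀ n : ℕ, T ^ n * S ^ n = 1 := by
    intro n
    rw [hS, ← hu, ← Units.val_pow_eq_pow_val, ← Units.val_pow_eq_pow_val, ← Units.val_mul,
      inv_pow, mul_inv_cancel, Units.val_one]
  have hST : ∀ n : ℕ, S ^ n * T ^ n = 1 := by
    intro n
    rw [hS, ← hu, ← Units.val_pow_eq_pow_val, ← Units.val_pow_eq_pow_val, ← Units.val_mul,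
      inv_pow, inv_mul_cancel, Units.val_one]
  constructor
  · -- JSet T 0 = univ
    apply Set.eq_univ_iff_forall.mpr
    intro y
    refine ⟨id, strictMono_id, fun n => (S ^ n) y, ?_, ?_⟩
    · rw [show (0 : X) = 0 from rfl]
      apply tendsto_zero_iff_norm_tendsto_zero.mpr
      apply squeeze_zero (fun n => norm_nonneg _) (fun n => (S ^ n).le_opNorm y)
      simpa using hdecay.mul_const ‖y‖
    · have : ∀ n : ℕ, (T ^ n) ((S ^ n) y) = y := by
        intro n
        rw [← ContinuousLinearMap.mul_apply, hTS n, ContinuousLinearMap.one_apply]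
      simpa only [id, this] using tendsto_const_nhds (α := ℕ) (x := y) (f := atTop)
  · -- JSet T x ≠ univ for x ≠ 0
    intro x hx hJ
    have h0mem : (0 : X) ∈ JSet T x := hJ ▸ Set.mem_univ 0
    obtain ⟨k, hk, v, hv, hTv⟩ := h0mem
    have hvz : Tendsto v atTop (𝓝 0) := by
      apply tendsto_zero_iff_norm_tendsto_zero.mpr
      have hid : ∀ n, v n = (S ^ k n) ((T ^ k n) (v n)) := by
        intro n
        rw [← ContinuousLinearMap.mul_apply, hST (k n), ContinuousLinearMap.one_apply]
      have hb : ∀ n, ‖v n‖ ≤ ‖S ^ k n‖ * ‖(T ^ k n) (v n)‖ := by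
        intro n
        conv_lhs => rw [hid n]
        exact (S ^ k n).le_opNorm _
      apply squeeze_zero (fun n => norm_nonneg _) hb
      have h1 : Tendsto (fun n => ‖S ^ k n‖) atTop (𝓝 0) := hdecay.comp hk.tendsto_atTop
      have h2 : Tendsto (fun n => ‖(T ^ k n) (v n)‖) atTop (𝓝 ‖(0 : X)‖) := hTv.norm
      simpa using h1.mul h2
    exact hx (tendsto_nhds_unique hv hvz)
end
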